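/- arXiv:2302.08403 — 2 statements merged into one kernel-verified Lean document; each statement's English description precedes it below -/
import Mathlib

section
/- dim_H(Θ²) ≤ 7/5. -/
open Filter Set Topology
open scoped ENNReal

noncomputable section

namespace BestApprox

/-- For `ξ ∈ ℝ^m`, the vector `ξ* = (ξ, 1) ∈ ℝ^{m+1}`. -/
def star {m : ℕ} (ξ : Fin m → ℝ) : Fin (m + 1) → ℝ := Fin.snoc ξ 1

/-- For `q ∈ ℤ^{m+1}`, the vector `q̂ ∈ ℤ^m` of its first `m` coordinates. -/
def hat {m : ℕ} (q : Fin (m + 1) → ℤ) : Fin m → ℤ := fun i => q i.castSucc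

/-- View an integer vector as a real vector. -/
def realVec {k : ℕ} (q : Fin k → ℤ) : Fin k → ℝ := fun i => (q i : ℝ)

/-- `|q ⬝ ξ*|`, the absolute value of the linear form. -/
def linForm {m : ℕ} (ξ : Fin m → ℝ) (q : Fin (m + 1) → ℤ) : ℝ :=
  |∑ i, (q i : ℝ) * star ξ i|

/-- `ξ` is totally irrational: `q ⬝ ξ* ≠ 0` for every nonzero integer vector `q`. -/
def TotallyIrrational {m : ℕ} (ξ : Fin m → ℝ) : Prop :=
  ∀ q : Fin (m + 1) → ℤ, q ≠ 0 → (∑ i, (q i : ℝ) * star ξ i) ≠ 0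

/-- `q` is a best approximation for `ξ` (max norm on the first `m` coordinates). -/
def IsBestApprox {m : ℕ} (ξ : Fin m → ℝ) (q : Fin (m + 1) → ℤ) : Prop :=
  hat q ≠ 0 ∧
    ∀ b : Fin (m + 1) → ℤ, hat b ≠ 0 → ‖hat b‖ ≤ ‖hat q‖ → linForm ξ q ≤ linForm ξ b

/-- `Q` is the sequence of best approximations of `ξ`, ordered by increasing norm,
each best approximation occurring (up to sign) exactly once. -/
def IsBestApproxSeq {m : ℕ} (ξ : Fin m → ℝ) (Q : ℕ → Fin (m + 1) → ℤ) : Prop :=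
  (∀ j, IsBestApprox ξ (Q j)) ∧
    (∀ j, ‖hat (Q j)‖ < ‖hat (Q (j + 1))‖) ∧
    (∀ j, linForm ξ (Q (j + 1)) < linForm ξ (Q j)) ∧
    (∀ b, IsBestApprox ξ b → ∃ j, b = Q j ∨ b = -Q j)

/-- Some tail of the best approximation sequence of `ξ` lies in `S`. -/
def HasTailIn {m : ℕ} (ξ : Fin m → ℝ) (S : Set (Fin (m + 1) → ℤ)) : Prop :=
  ∃ Q : ℕ → Fin (m + 1) → ℤ, IsBestApproxSeq ξ Q ∧ ∃ j₀ : ℕ, ∀ j ≥ j₀, Q j ∈ S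

/-- `R(ξ)`: the minimal `R` such that some tail of the best approximation sequence
lies in an `R`-dimensional sublattice of `ℤ^{m+1}`. -/
def Rexp {m : ℕ} (ξ : Fin m → ℝ) : ℕ :=
  sInf {R : ℕ | ∃ L : Submodule ℤ (Fin (m + 1) → ℤ),
    Module.finrank ℤ L = R ∧ HasTailIn ξ (L : Set (Fin (m + 1) → ℤ))}

/-- `Γₙ`: totally irrational `ξ ∈ ℝⁿ` with `R(ξ) = 3`. -/
def Gamma (n : ℕ) : Set (Fin n → ℝ) := {ξ | TotallyIrrational ξ ∧ Rexp ξ = 3}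

/-- `Γ_{n,k}`: totally irrational `ξ ∈ ℝⁿ` with `R(ξ) ≤ k`. -/
def GammaNK (n k : ℕ) : Set (Fin n → ℝ) := {ξ | TotallyIrrational ξ ∧ Rexp ξ ≤ k}

/-- `min{|b ⬝ ξ*| : 0 < ‖b̂‖ ≤ Q}`. -/
def minForm {m : ℕ} (ξ : Fin m → ℝ) (Q : ℝ) : ℝ :=
  sInf {r : ℝ | ∃ b : Fin (m + 1) → ℤ, hat b ≠ 0 ∧ ‖hat b‖ ≤ Q ∧ r = linForm ξ b}

/-- The uniform exponent `ŵ(ξ)` (as an extended real number). -/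
def uexp {m : ℕ} (ξ : Fin m → ℝ) : EReal :=
  sSup {t : EReal | ∃ t' : ℝ, t = (t' : EReal) ∧ 0 < t' ∧
    ∃ C : ℝ, ∀ᶠ Q : ℝ in atTop, Q ^ t' * minForm ξ Q ≤ C}

/-- The ordinary exponent `ω(ξ)` (as an extended real number). -/
def oexp {m : ℕ} (ξ : Fin m → ℝ) : EReal :=
  sSup {t : EReal | ∃ t' : ℝ, t = (t' : EReal) ∧ 0 < t' ∧
    ∃ C : ℝ, ∃ᶠ Q : ℝ in atTop, Q ^ t' * minForm ξ Q ≤ C}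

/-- `H_i ⊆ ℤ^{n+1}`: the two-dimensional sublattice spanned by `e_i` and `e_{n+1}`,
i.e. integer vectors all of whose coordinates vanish except possibly the `i`-th
and the last one. -/
def Hlat (n : ℕ) (i : Fin (n + 1)) : Set (Fin (n + 1) → ℤ) :=
  {q | ∀ j : Fin (n + 1), j ≠ i → j ≠ Fin.last n → q j = 0}

/-- `Θⁿ`: totally irrational `ξ ∈ ℝⁿ` whose tail of best approximations lies in
`H₁ ∪ H₂`, alternately, with any three consecutive ones linearly independent. -/
def Theta (n : ℕ) : Set (Fin n → ℝ) :=
  {ξ | TotallyIrrational ξ ∧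
    ∃ Q : ℕ → Fin (n + 1) → ℤ, IsBestApproxSeq ξ Q ∧
      ∃ j₀ : ℕ,
        (∀ j ≥ j₀, Q j ∈ Hlat n 0 ∪ Hlat n 1) ∧
        (∀ j ≥ j₀, ¬(Q j ∈ Hlat n 0 ∧ Q (j + 1) ∈ Hlat n 0) ∧
          ¬(Q j ∈ Hlat n 1 ∧ Q (j + 1) ∈ Hlat n 1)) ∧
        (∀ j ≥ j₀, LinearIndependent ℝ
          ![realVec (Q j), realVec (Q (j + 1)), realVec (Q (j + 2))])}

/-- `Θₙ(w)` for real `w`: elements of `Θⁿ` with `ŵ(ξ) = w` and `ω(ξ) = w²`. -/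
def ThetaW (n : ℕ) (w : ℝ) : Set (Fin n → ℝ) :=
  {ξ | ξ ∈ Theta n ∧ uexp ξ = (w : EReal) ∧ oexp ξ = ((w ^ 2 : ℝ) : EReal)}

/-- Covering number: minimal number of `ε`-balls needed to cover `S`. -/
def coverNum {X : Type*} [PseudoEMetricSpace X] (S : Set X) (ε : ℝ≥0∞) : ℝ≥0∞ :=
  sInf {N : ℝ≥0∞ | ∃ F : Finset X, (S ⊆ ⋃ x ∈ F, EMetric.ball x ε) ∧ N = F.card}

/-- Upper box (Minkowski) dimension: the infimum of exponents `r ≥ 0` such that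
the covering number is `O(ε^{-r})` as `ε → 0⁺`. -/
def upperBoxDim {X : Type*} [PseudoEMetricSpace X] (S : Set X) : ℝ≥0∞ :=
  sInf {s : ℝ≥0∞ | ∃ r : ℝ, 0 ≤ r ∧ s = ENNReal.ofReal r ∧
    ∃ C : ℝ≥0∞, C ≠ ⊤ ∧ ∀ᶠ ε in 𝓝[>] (0 : ℝ≥0∞), coverNum S ε ≤ C * ε⁻¹ ^ r}

/-- Packing dimension, via the modified upper box dimension. -/
def packingDim {X : Type*} [PseudoEMetricSpace X] (S : Set X) : ℝ≥0∞ :=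
  ⨅ (U : ℕ → Set X) (_ : S ⊆ ⋃ i, U i), ⨆ i, upperBoxDim (U i)

open Filter Set Topology MeasureTheory EMetric
open scoped ENNReal


lemma star_zero (ξ : Fin 2 → ℝ) : star ξ 0 = ξ 0 := rfl
lemma star_one (ξ : Fin 2 → ℝ) : star ξ 1 = ξ 1 := rfl
lemma star_two (ξ : Fin 2 → ℝ) : star ξ 2 = 1 := rfl

lemma hat_zero (q : Fin 3 → ℤ) : hat q 0 = q 0 := rfl
lemma hat_one (q : Fin 3 → ℤ) : hat q 1 = q 1 := rfl

lemma linForm_eq (ξ : Fin 2 → ℝ) (q : Fin 3 → ℤ) :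
    linForm ξ q = |(q 0 : ℝ) * ξ 0 + (q 1 : ℝ) * ξ 1 + (q 2 : ℝ)| := by
  unfold linForm
  rw [Fin.sum_univ_three, star_zero, star_one, star_two, mul_one]


open Filter Set Topology MeasureTheory EMetric
open scoped ENNReal

lemma abs_cast_natAbs (a : ℤ) : |(a:ℝ)| = ((a.natAbs : ℕ) : ℝ) := by
  rw [Nat.cast_natAbs, Int.cast_abs]

lemma norm2_le {w : Fin 2 → ℤ} {r : ℝ} (hr : 0 ≤ r) (h : ∀ i, |(w i : ℝ)| ≤ r) : ‖w‖ ≤ r := by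
  rw [pi_norm_le_iff_of_nonneg hr]; intro i; rw [Int.norm_eq_abs]; exact_mod_cast h i

lemma le_norm2 (w : Fin 2 → ℤ) (i : Fin 2) : |(w i : ℝ)| ≤ ‖w‖ := by
  rw [← Int.norm_eq_abs]; exact norm_le_pi_norm w i

/-- the sup-norm of an integer 2-vector is a natural number -/
lemma norm2_natCast (w : Fin 2 → ℤ) : ‖w‖ = (max (w 0).natAbs (w 1).natAbs : ℕ) := by
  apply le_antisymm
  · apply norm2_le (by positivity)
    intro i
    fin_cases i <;>
    · rw [abs_cast_natAbs]
      push_cast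
      first
        | exact_mod_cast le_max_left (w 0).natAbs (w 1).natAbs
        | exact_mod_cast le_max_right (w 0).natAbs (w 1).natAbs
  · rcases le_total (w 0).natAbs (w 1).natAbs with h | h
    · rw [max_eq_right h]
      calc ((w 1).natAbs : ℝ) = |(w 1 : ℝ)| := (abs_cast_natAbs _).symm
        _ ≤ ‖w‖ := le_norm2 w 1
    · rw [max_eq_left h]
      calc ((w 0).natAbs : ℝ) = |(w 0 : ℝ)| := (abs_cast_natAbs _).symm
        _ ≤ ‖w‖ := le_norm2 w 0

lemma norm2_succ {u v : Fin 2 → ℤ} (h : ‖u‖ < ‖v‖) : ‖u‖ + 1 ≤ ‖v‖ := by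
  rw [norm2_natCast u, norm2_natCast v] at *
  have : (max (u 0).natAbs (u 1).natAbs) < (max (v 0).natAbs (v 1).natAbs) := by exact_mod_cast h
  have := Nat.succ_le_of_lt this
  push_cast
  exact_mod_cast this

lemma one_le_norm2 {u : Fin 2 → ℤ} (h : u ≠ 0) : 1 ≤ ‖u‖ := by
  rcases Function.ne_iff.1 h with ⟨i, hi⟩
  simp only [Pi.zero_apply] at hi
  calc (1:ℝ) ≤ |(u i : ℝ)| := by
        rw [← Int.cast_abs]; exact_mod_cast Int.one_le_abs hi
    _ ≤ ‖u‖ := le_norm2 u i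

open Filter Set Topology MeasureTheory EMetric
open scoped ENNReal

lemma hat_vec (a b c : ℤ) : hat ![a, b, c] = ![a, b] := by
  funext j; fin_cases j <;> rfl

/-- Dirichlet's theorem for one linear form in two variables. -/
lemma dirichlet (ξ : Fin 2 → ℝ) (N : ℕ) (hN : 1 ≤ N) :
    ∃ v : Fin 3 → ℤ, hat v ≠ 0 ∧ ‖hat v‖ ≤ (N:ℝ) ∧ linForm ξ v ≤ 1/(N:ℝ)^2 := by
  classical
  set M : ℕ := N^2 + 2*N with hM
  have hM1 : 1 ≤ M := le_trans (by omega) (Nat.le_add_left (2*N) (N^2))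
  set u : ℤ × ℤ → ℝ := fun p => p.1 * ξ 0 + p.2 * ξ 1 with hu
  set f : ℤ × ℤ → ℤ := fun p => ⌊Int.fract (u p) * M⌋ with hf
  set S : Finset (ℤ × ℤ) := Finset.Icc (0:ℤ) N ×ˢ Finset.Icc (0:ℤ) N with hS
  set T : Finset ℤ := Finset.Icc (0:ℤ) (M-1) with hT
  have cardS : S.card = (N+1)^2 := by
    rw [hS, Finset.card_product, Int.card_Icc]
    simp
    ring
  have cardT : T.card = M := by
    rw [hT, Int.card_Icc]
    omega
  have hcard : T.card < S.card := by
    have hsq : (N+1)^2 = M + 1 := by rw [hM]; ring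
    rw [cardS, cardT, hsq]; omega
  have hMpos : (0:ℝ) < M := by exact_mod_cast hM1
  have hmaps : ∀ p ∈ S, f p ∈ T := by
    intro p _
    rw [hT, Finset.mem_Icc]
    simp only [hf]
    have hlt : ⌊Int.fract (u p) * M⌋ < (M:ℤ) := by
      apply Int.floor_lt.2
      push_cast
      have := Int.fract_lt_one (u p)
      nlinarith
    have hge : (0:ℤ) ≤ ⌊Int.fract (u p) * M⌋ := by
      apply Int.le_floor.2
      push_cast
      exact mul_nonneg (Int.fract_nonneg _) hMpos.le
    omega
  obtain ⟨x, hx, y, hy, hxy, hfeq⟩ := Finset.exists_ne_map_eq_of_card_lt_of_maps_to hcard hmaps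
  have hfrac : |Int.fract (u x) - Int.fract (u y)| ≤ 1/(N:ℝ)^2 := by
    have hx1 : (f x : ℝ) ≤ Int.fract (u x) * M := Int.floor_le _
    have hx2 : Int.fract (u x) * M < f x + 1 := Int.lt_floor_add_one _
    have hy1 : (f y : ℝ) ≤ Int.fract (u y) * M := Int.floor_le _
    have hy2 : Int.fract (u y) * M < f y + 1 := Int.lt_floor_add_one _
    rw [hfeq] at hx1 hx2
    have h1M : (1/(M:ℝ)) * M = 1 := by field_simp
    have habs : |Int.fract (u x) - Int.fract (u y)| ≤ 1 / M := by
      rw [abs_sub_le_iff]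
      constructor <;> nlinarith [h1M, hx1, hx2, hy1, hy2, hMpos]
    have hN2 : (0:ℝ) < (N:ℝ)^2 := by positivity
    have hNM : (N:ℝ)^2 ≤ M := by rw [hM]; push_cast; nlinarith [Nat.cast_nonneg (α := ℝ) N]
    exact le_trans habs (by apply one_div_le_one_div_of_le hN2 hNM)
  have hx' := Finset.mem_product.1 hx
  have hy' := Finset.mem_product.1 hy
  obtain ⟨hx1', hx2'⟩ := hx'
  obtain ⟨hy1', hy2'⟩ := hy'
  rw [Finset.mem_Icc] at hx1' hx2' hy1' hy2'
  refine ⟨![x.1 - y.1, x.2 - y.2, ⌊u y⌋ - ⌊u x⌋], ?_, ?_, ?_⟩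
  · rw [hat_vec]
    intro h
    apply hxy
    have h0 := congrFun h 0
    have h1 := congrFun h 1
    simp at h0 h1
    exact Prod.ext (by omega) (by omega)
  · rw [hat_vec]
    apply norm2_le (by positivity)
    intro i
    fin_cases i <;>
    · simp only [Matrix.cons_val_zero, Matrix.cons_val_one, Matrix.head_cons]
      rw [← Int.cast_abs]
      first
        | exact_mod_cast (by rw [abs_le]; omega : |x.1 - y.1| ≤ (N:ℤ))
        | exact_mod_cast (by rw [abs_le]; omega : |x.2 - y.2| ≤ (N:ℤ))
  · rw [linForm_eq]
    have heq : ((![x.1 - y.1, x.2 - y.2, ⌊u y⌋ - ⌊u x⌋] : Fin 3 → ℤ) 0 : ℝ) * ξ 0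
        + ((![x.1 - y.1, x.2 - y.2, ⌊u y⌋ - ⌊u x⌋] : Fin 3 → ℤ) 1 : ℝ) * ξ 1
        + ((![x.1 - y.1, x.2 - y.2, ⌊u y⌋ - ⌊u x⌋] : Fin 3 → ℤ) 2 : ℝ)
        = Int.fract (u x) - Int.fract (u y) := by
      simp only [Matrix.cons_val_zero, Matrix.cons_val_one, Matrix.head_cons,
        Matrix.cons_val_two, Matrix.tail_cons]
      rw [Int.fract, Int.fract, hu]
      push_cast
      ring
    rw [heq]
    exact hfrac

lemma hat_neg (q : Fin 3 → ℤ) : hat (-q) = -(hat q) := rfl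

lemma linForm_neg (ξ : Fin 2 → ℝ) (q : Fin 3 → ℤ) : linForm ξ (-q) = linForm ξ q := by
  have h : ∑ i, (((-q) i : ℤ) : ℝ) * star ξ i = -∑ i, ((q i : ℤ) : ℝ) * star ξ i := by
    rw [← Finset.sum_neg_distrib]
    apply Finset.sum_congr rfl
    intro i _
    simp only [Pi.neg_apply]
    push_cast
    ring
  unfold linForm
  rw [h, abs_neg]

lemma linForm_pos {ξ : Fin 2 → ℝ} (hirr : TotallyIrrational ξ) {q : Fin 3 → ℤ}
    (hq : hat q ≠ 0) : 0 < linForm ξ q := by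
  have hq0 : q ≠ 0 := by
    intro h; apply hq; rw [h]; rfl
  have := hirr q hq0
  unfold linForm
  exact abs_pos.2 this

/-- The minimum of the linear form over a norm ball is attained at a best approximation. -/
lemma exists_bestApprox_min (ξ : Fin 2 → ℝ) (v : Fin 3 → ℤ) (hv : hat v ≠ 0) {N : ℝ}
    (hN : ‖hat v‖ ≤ N) :
    ∃ w, IsBestApprox ξ w ∧ ‖hat w‖ ≤ N ∧ linForm ξ w ≤ linForm ξ v := by
  classical
  set T : Set (Fin 3 → ℤ) :=
    {b | hat b ≠ 0 ∧ ‖hat b‖ ≤ N ∧ linForm ξ b ≤ linForm ξ v} with hT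
  have hvT : v ∈ T := ⟨hv, hN, le_rfl⟩
  -- T is finite
  have hfin : T.Finite := by
    set R : ℝ := linForm ξ v + N * (|ξ 0| + |ξ 1|) with hR
    apply Set.Finite.subset (Set.Finite.pi'
      (t := fun i : Fin 3 => Set.Icc (-(max ⌈N⌉ ⌈R⌉)) (max ⌈N⌉ ⌈R⌉)) (fun i => Set.finite_Icc _ _))
    intro b hb
    obtain ⟨hb1, hb2, hb3⟩ := hb
    have habs : ∀ i : Fin 3, |(b i : ℝ)| ≤ max ⌈N⌉ ⌈R⌉ := by
      have h0 : |(b 0 : ℝ)| ≤ N := by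
        have := le_norm2 (hat b) 0
        rw [hat_zero] at this
        linarith
      have h1 : |(b 1 : ℝ)| ≤ N := by
        have := le_norm2 (hat b) 1
        rw [hat_one] at this
        linarith
      have h2 : |(b 2 : ℝ)| ≤ R := by
        have hlin : |(b 0 : ℝ) * ξ 0 + (b 1 : ℝ) * ξ 1 + (b 2 : ℝ)| ≤ linForm ξ v := by
          rw [← linForm_eq]; exact hb3
        have e1 : |(b 0 : ℝ) * ξ 0| ≤ N * |ξ 0| := by
          rw [abs_mul]
          apply mul_le_mul_of_nonneg_right h0 (abs_nonneg _)
        have e2 : |(b 1 : ℝ) * ξ 1| ≤ N * |ξ 1| := by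
          rw [abs_mul]
          apply mul_le_mul_of_nonneg_right h1 (abs_nonneg _)
        have habs2 : |(b 0 : ℝ) * ξ 0 + (b 1 : ℝ) * ξ 1| ≤ N * |ξ 0| + N * |ξ 1| :=
          le_trans (abs_add_le _ _) (by linarith)
        have key := abs_sub ((b 0:ℝ)*ξ 0 + (b 1:ℝ)*ξ 1 + (b 2:ℝ)) ((b 0:ℝ)*ξ 0 + (b 1:ℝ)*ξ 1)
        have hsimp : (b 0:ℝ)*ξ 0 + (b 1:ℝ)*ξ 1 + (b 2:ℝ) - ((b 0:ℝ)*ξ 0 + (b 1:ℝ)*ξ 1)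
            = (b 2:ℝ) := by ring
        rw [hsimp] at key
        rw [hR]
        linarith
      intro i
      fin_cases i
      · exact le_trans h0 (by
          have : (⌈N⌉ : ℝ) ≤ ((max ⌈N⌉ ⌈R⌉ : ℤ) : ℝ) := by exact_mod_cast le_max_left _ _
          linarith [Int.le_ceil N])
      · exact le_trans h1 (by
          have : (⌈N⌉ : ℝ) ≤ ((max ⌈N⌉ ⌈R⌉ : ℤ) : ℝ) := by exact_mod_cast le_max_left _ _
          linarith [Int.le_ceil N])
      · exact le_trans h2 (by
          have : (⌈R⌉ : ℝ) ≤ ((max ⌈N⌉ ⌈R⌉ : ℤ) : ℝ) := by exact_mod_cast le_max_right _ _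
          linarith [Int.le_ceil R])
    intro i
    have := habs i
    rw [← Int.cast_abs] at this
    have hfin' : |b i| ≤ max ⌈N⌉ ⌈R⌉ := by exact_mod_cast this
    rw [Set.mem_Icc]
    exact abs_le.1 hfin'
  obtain ⟨w, hwT, hwmin⟩ := Set.exists_min_image T (linForm ξ) hfin ⟨v, hvT⟩
  obtain ⟨hw1, hw2, hw3⟩ := hwT
  refine ⟨w, ⟨hw1, ?_⟩, hw2, hw3⟩
  intro b hb1 hb2
  rcases le_total (linForm ξ b) (linForm ξ v) with h | h
  · exact hwmin b ⟨hb1, le_trans hb2 hw2, h⟩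
  · exact le_trans hw3 h

/-- key gap estimate from Dirichlet + best approximation sequence structure -/
lemma gap_bound {ξ : Fin 2 → ℝ} {Q : ℕ → Fin 3 → ℤ} (hQ : IsBestApproxSeq ξ Q)
    (j N : ℕ) (hN : 1 ≤ N) (hlt : (N:ℝ) < ‖hat (Q (j+1))‖) :
    linForm ξ (Q j) ≤ 1/(N:ℝ)^2 := by
  obtain ⟨hba, hnorm, hdec, hall⟩ := hQ
  obtain ⟨v, hv1, hv2, hv3⟩ := dirichlet ξ N hN
  obtain ⟨w, hw, hwN, hwv⟩ := exists_bestApprox_min ξ v hv1 hv2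
  obtain ⟨i, hi⟩ := hall w hw
  have hnormw : ‖hat (Q i)‖ ≤ (N:ℝ) := by
    rcases hi with rfl | rfl
    · exact hwN
    · rw [hat_neg, norm_neg] at hwN; exact hwN
  have hlinw : linForm ξ (Q i) ≤ 1/(N:ℝ)^2 := by
    rcases hi with rfl | rfl
    · exact le_trans hwv hv3
    · rw [linForm_neg] at hwv; exact le_trans hwv hv3
  have hmono : StrictMono fun k => ‖hat (Q k)‖ := strictMono_nat_of_lt_succ hnorm
  have hij : i ≤ j := by
    by_contra h
    push_neg at h
    have : ‖hat (Q (j+1))‖ ≤ ‖hat (Q i)‖ := hmono.monotone h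
    linarith
  have hanti : StrictAnti fun k => linForm ξ (Q k) := strictAnti_nat_of_succ_lt hdec
  exact le_trans (hanti.antitone hij) hlinw

lemma mem_Hlat0 {q : Fin 3 → ℤ} (h : q ∈ Hlat 2 0) : q 1 = 0 :=
  h 1 (by decide) (by decide)

lemma mem_Hlat1 {q : Fin 3 → ℤ} (h : q ∈ Hlat 2 1) : q 0 = 0 :=
  h 0 (by decide) (by decide)

lemma norm_hat_H0 {q : Fin 3 → ℤ} (h : q ∈ Hlat 2 0) : ‖hat q‖ = ((q 0).natAbs : ℝ) := by
  rw [norm2_natCast, hat_zero, hat_one, mem_Hlat0 h]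
  simp

lemma norm_hat_H1 {q : Fin 3 → ℤ} (h : q ∈ Hlat 2 1) : ‖hat q‖ = ((q 1).natAbs : ℝ) := by
  rw [norm2_natCast, hat_zero, hat_one, mem_Hlat1 h]
  simp

/-- determinant lower bound for two best approximations in the plane H₁ -/
lemma det_bound {ξ : Fin 2 → ℝ} (hirr : TotallyIrrational ξ) {Q : ℕ → Fin 3 → ℤ}
    (hQ : IsBestApproxSeq ξ Q) {i k : ℕ} (hik : i < k)
    (hi : Q i ∈ Hlat 2 1) (hk : Q k ∈ Hlat 2 1) :
    1 ≤ 2 * ‖hat (Q k)‖ * linForm ξ (Q i) := by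
  obtain ⟨hba, hnorm, hdec, hall⟩ := hQ
  set b := Q i 1 with hb
  set d := Q i 2 with hd
  set b' := Q k 1 with hb'
  set d' := Q k 2 with hd'
  have hLi : linForm ξ (Q i) = |(b:ℝ) * ξ 1 + d| := by
    rw [linForm_eq, mem_Hlat1 hi]
    push_cast
    ring_nf
    simp only [hb, hd]
    ring_nf
  have hLk : linForm ξ (Q k) = |(b':ℝ) * ξ 1 + d'| := by
    rw [linForm_eq, mem_Hlat1 hk]
    push_cast
    ring_nf
    simp only [hb', hd']
    ring_nf
  have hanti : StrictAnti fun m => linForm ξ (Q m) := strictAnti_nat_of_succ_lt hdec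
  have hmono : StrictMono fun m => ‖hat (Q m)‖ := strictMono_nat_of_lt_succ hnorm
  have hLik : linForm ξ (Q k) < linForm ξ (Q i) := hanti hik
  have hLpos : 0 < linForm ξ (Q i) := linForm_pos hirr (hba i).1
  have hnik : ‖hat (Q i)‖ ≤ ‖hat (Q k)‖ := (hmono.monotone hik.le)
  have hbnorm : ‖hat (Q i)‖ = |(b:ℝ)| := by
    rw [norm_hat_H1 hi, ← hb, abs_cast_natAbs]
  have hbnorm' : ‖hat (Q k)‖ = |(b':ℝ)| := by
    rw [norm_hat_H1 hk, ← hb', abs_cast_natAbs]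
  have hbpos' : 1 ≤ |(b':ℝ)| := by
    rw [← hbnorm']
    exact one_le_norm2 (hba k).1
  have hble : |(b:ℝ)| ≤ |(b':ℝ)| := by rw [← hbnorm, ← hbnorm']; exact hnik
  set D : ℤ := b * d' - b' * d with hD
  have hDr : (D:ℝ) = (b:ℝ) * ((b':ℝ) * ξ 1 + d') - (b':ℝ) * ((b:ℝ) * ξ 1 + d) := by
    rw [hD]; push_cast; ring
  have hD0 : D ≠ 0 := by
    intro h
    rw [h] at hDr
    have heq : |(b:ℝ)| * linForm ξ (Q k) = |(b':ℝ)| * linForm ξ (Q i) := by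
      rw [hLi, hLk, ← abs_mul, ← abs_mul]
      congr 1
      push_cast at hDr ⊢
      linarith
    have hLk0 : 0 ≤ linForm ξ (Q k) := by
      rw [hLk]; exact abs_nonneg _
    have f1 : |(b:ℝ)| * linForm ξ (Q k) ≤ |(b':ℝ)| * linForm ξ (Q k) :=
      mul_le_mul_of_nonneg_right hble hLk0
    have f2 : |(b':ℝ)| * linForm ξ (Q k) < |(b':ℝ)| * linForm ξ (Q i) := by
      apply mul_lt_mul_of_pos_left hLik
      linarith
    linarith
  have hD1 : (1:ℝ) ≤ |(D:ℝ)| := by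
    rw [← Int.cast_abs]
    exact_mod_cast Int.one_le_abs hD0
  have hDle : |(D:ℝ)| ≤ |(b:ℝ)| * linForm ξ (Q k) + |(b':ℝ)| * linForm ξ (Q i) := by
    rw [hDr, hLi, hLk]
    calc |(b:ℝ) * ((b':ℝ) * ξ 1 + d') - (b':ℝ) * ((b:ℝ) * ξ 1 + d)|
        ≤ |(b:ℝ) * ((b':ℝ) * ξ 1 + d')| + |(b':ℝ) * ((b:ℝ) * ξ 1 + d)| := abs_sub _ _
      _ = |(b:ℝ)| * |(b':ℝ) * ξ 1 + d'| + |(b':ℝ)| * |(b:ℝ) * ξ 1 + d| := by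
          rw [abs_mul, abs_mul]
  rw [hbnorm']
  nlinarith [hLik.le, hLpos.le, (linForm_pos hirr (hba k).1).le]

/-- The exceptional set: `ξ₀` is approximable to order 4 (form version) infinitely often. -/
def Wset : Set (Fin 2 → ℝ) :=
  {ξ | ∀ K : ℕ, ∃ q : ℕ, K ≤ q ∧ 1 ≤ q ∧ ∃ p : ℤ, |(q:ℝ) * ξ 0 + (p:ℝ)| ≤ 256 / (q:ℝ)^4}

lemma chain_arith {a bb L : ℝ} (ha : 5 ≤ a) (hb : 6 ≤ bb) (h2 : (a-1)^2 ≤ 2*bb)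
    (hL : L ≤ 1/(bb-1)^2) : L ≤ 256/a^4 := by
  have hsq : 16 ≤ (a-1)^2 := by
    nlinarith [mul_nonneg (by linarith : (0:ℝ) ≤ a - 5) (by linarith : (0:ℝ) ≤ a + 3)]
  have h1 : (a-1)^2/4 ≤ bb - 1 := by linarith
  have hb1 : 0 < bb - 1 := by linarith
  have ha1 : 0 < a - 1 := by linarith
  have hq : ((a-1)^2/4)^2 ≤ (bb-1)^2 := pow_le_pow_left₀ (by positivity) h1 2
  have h3 : (a-1)^4/16 ≤ (bb-1)^2 := by nlinarith
  have key : (a/2) ≤ a - 1 := by linarith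
  have hp : (a/2)^4 ≤ (a-1)^4 := pow_le_pow_left₀ (by linarith) key 4
  have h5 : a^4/256 ≤ (a-1)^4/16 := by nlinarith
  have h6 : 0 < a^4/256 := by positivity
  have h7 : 1/(bb-1)^2 ≤ 1/(a^4/256) := by
    apply one_div_le_one_div_of_le h6
    linarith
  have h8 : 1/(a^4/256) = 256/a^4 := by
    field_simp
  linarith

lemma theta_subset_W : Theta 2 ⊆ Wset := by
  rintro ξ ⟨hirr, Q, hQ, j₀, hmem, halt, -⟩
  intro K
  -- norms grow at least linearly
  have hgrow : ∀ j : ℕ, (j:ℝ) ≤ ‖hat (Q j)‖ := by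
    intro j
    induction j with
    | zero => simpa using norm_nonneg (hat (Q 0))
    | succ n ih =>
      have := norm2_succ (hQ.2.1 n)
      push_cast
      linarith
  -- step lemmas for alternation
  have hstep0 : ∀ j, j₀ ≤ j → Q j ∈ Hlat 2 0 → Q (j+1) ∈ Hlat 2 1 := by
    intro j hj hj0
    rcases hmem (j+1) (by omega) with h | h
    · exact absurd ⟨hj0, h⟩ (halt j hj).1
    · exact h
  have hstep1 : ∀ j, j₀ ≤ j → Q j ∈ Hlat 2 1 → Q (j+1) ∈ Hlat 2 0 := by
    intro j hj hj1
    rcases hmem (j+1) (by omega) with h | h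
    · exact h
    · exact absurd ⟨hj1, h⟩ (halt j hj).2
  set J := j₀ + K + 3 with hJ
  -- find j ≥ J with Q j ∈ Hlat 2 0
  obtain ⟨j, hjJ, hj0⟩ : ∃ j, J ≤ j ∧ Q j ∈ Hlat 2 0 := by
    rcases hmem J (by omega) with h | h
    · exact ⟨J, le_rfl, h⟩
    · exact ⟨J + 1, by omega, hstep1 J (by omega) h⟩
  have hjge : j₀ ≤ j := by omega
  have m1 : Q (j+1) ∈ Hlat 2 1 := hstep0 j hjge hj0
  have m2 : Q (j+2) ∈ Hlat 2 0 := hstep1 (j+1) (by omega) m1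
  have m3 : Q (j+3) ∈ Hlat 2 1 := hstep0 (j+2) (by omega) m2
  set A : ℕ := (Q (j+2) 0).natAbs with hA
  set B : ℕ := (Q (j+3) 1).natAbs with hB
  have normA : ‖hat (Q (j+2))‖ = (A:ℝ) := norm_hat_H0 m2
  have normB : ‖hat (Q (j+3))‖ = (B:ℝ) := norm_hat_H1 m3
  have hAge : (j+2 : ℕ) ≤ A := by
    have := hgrow (j+2)
    rw [normA] at this
    exact_mod_cast this
  have hBge : (j+3 : ℕ) ≤ B := by
    have := hgrow (j+3)
    rw [normB] at this
    exact_mod_cast this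
  have hA5 : 5 ≤ A := by omega
  have hB6 : 6 ≤ B := by omega
  have hAK : K ≤ A := by omega
  -- gap bounds
  have castA : ((A - 1 : ℕ) : ℝ) = (A:ℝ) - 1 := by
    rw [Nat.cast_sub (by omega)]
    norm_num
  have castB : ((B - 1 : ℕ) : ℝ) = (B:ℝ) - 1 := by
    rw [Nat.cast_sub (by omega)]
    norm_num
  have gap1 : linForm ξ (Q (j+1)) ≤ 1/((A:ℝ) - 1)^2 := by
    have := gap_bound hQ (j+1) (A-1) (by omega) (by
      rw [castA, normA]
      have : (1:ℝ) ≤ (A:ℝ) := by exact_mod_cast (by omega : 1 ≤ A)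
      linarith)
    rwa [castA] at this
  have gap2 : linForm ξ (Q (j+2)) ≤ 1/((B:ℝ) - 1)^2 := by
    have := gap_bound hQ (j+2) (B-1) (by omega) (by
      rw [castB, normB]
      have : (1:ℝ) ≤ (B:ℝ) := by exact_mod_cast (by omega : 1 ≤ B)
      linarith)
    rwa [castB] at this
  have det1 : 1 ≤ 2 * (B:ℝ) * linForm ξ (Q (j+1)) := by
    have := det_bound hirr hQ (show j+1 < j+3 by omega) m1 m3
    rwa [normB] at this
  -- (A-1)^2 ≤ 2B
  have hM0 : 0 ≤ linForm ξ (Q (j+1)) := abs_nonneg _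
  have hB0 : (0:ℝ) ≤ 2 * (B:ℝ) := by positivity
  have hApos : (0:ℝ) < ((A:ℝ) - 1)^2 := by
    have : (5:ℝ) ≤ (A:ℝ) := by exact_mod_cast hA5
    nlinarith
  have hsq2B : ((A:ℝ) - 1)^2 ≤ 2 * (B:ℝ) := by
    have k1 : ((A:ℝ)-1)^2 * 1 ≤ ((A:ℝ)-1)^2 * (2 * (B:ℝ) * linForm ξ (Q (j+1))) :=
      mul_le_mul_of_nonneg_left det1 hApos.le
    have k2 : linForm ξ (Q (j+1)) * ((A:ℝ)-1)^2 ≤ (1/((A:ℝ)-1)^2) * ((A:ℝ)-1)^2 :=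
      mul_le_mul_of_nonneg_right gap1 hApos.le
    have k3 : (1/((A:ℝ)-1)^2) * ((A:ℝ)-1)^2 = 1 := by
      exact one_div_mul_cancel hApos.ne'
    rw [k3] at k2
    have k4 : 2 * (B:ℝ) * (linForm ξ (Q (j+1)) * ((A:ℝ)-1)^2) ≤ 2 * (B:ℝ) * 1 :=
      mul_le_mul_of_nonneg_left k2 hB0
    nlinarith [k1, k4]
  -- final bound
  have hfin : linForm ξ (Q (j+2)) ≤ 256/(A:ℝ)^4 := by
    apply chain_arith (a := (A:ℝ)) (bb := (B:ℝ)) _ _ hsq2B gap2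
    · exact_mod_cast hA5
    · exact_mod_cast hB6
  have hform : linForm ξ (Q (j+2)) = |(Q (j+2) 0 : ℝ) * ξ 0 + (Q (j+2) 2 : ℝ)| := by
    rw [linForm_eq, mem_Hlat0 m2]
    push_cast
    ring_nf
  have habsA : ((A:ℕ):ℝ) = |(Q (j+2) 0 : ℝ)| := (abs_cast_natAbs _).symm
  refine ⟨A, hAK, by omega, ?_⟩
  rcases abs_cases ((Q (j+2) 0 : ℝ)) with ⟨h1, -⟩ | ⟨h1, -⟩
  · refine ⟨Q (j+2) 2, ?_⟩
    have e : (A:ℝ) * ξ 0 + ((Q (j+2) 2 : ℤ):ℝ)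
        = (Q (j+2) 0 : ℝ) * ξ 0 + (Q (j+2) 2 : ℝ) := by
      rw [habsA, h1]
    calc |(A:ℝ) * ξ 0 + ((Q (j+2) 2 : ℤ):ℝ)| = linForm ξ (Q (j+2)) := by rw [e, hform]
      _ ≤ 256/(A:ℝ)^4 := hfin
  · refine ⟨-(Q (j+2) 2), ?_⟩
    have e : (A:ℝ) * ξ 0 + ((-(Q (j+2) 2) : ℤ):ℝ)
        = -((Q (j+2) 0 : ℝ) * ξ 0 + (Q (j+2) 2 : ℝ)) := by
      rw [habsA, h1]
      push_cast
      ring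
    calc |(A:ℝ) * ξ 0 + ((-(Q (j+2) 2) : ℤ):ℝ)| = linForm ξ (Q (j+2)) := by
          rw [e, abs_neg, hform]
      _ ≤ 256/(A:ℝ)^4 := hfin

lemma real_term_bound {d : ℝ} (hd2 : d ≤ 2) {q : ℝ} (hq : 1 ≤ q) :
    (3*q+1) * (q^5+1) * (512/q^5)^d ≤ (8*512^2) * q^(6-5*d) := by
  have hq0 : (0:ℝ) < q := by linarith
  have e1 : (512/q^5)^d = (512:ℝ)^d / (q^5)^d := Real.div_rpow (by norm_num) (by positivity) d
  have e2 : ((q^5:ℝ))^d = q^(5*d) := by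
    rw [← Real.rpow_natCast q 5, ← Real.rpow_mul hq0.le]
    norm_num
  have e3 : (512:ℝ)^d ≤ (512:ℝ)^(2:ℝ) := Real.rpow_le_rpow_of_exponent_le (by norm_num) hd2
  have e4 : (512:ℝ)^(2:ℝ) = 512^2 := by
    rw [show (2:ℝ) = ((2:ℕ):ℝ) by norm_num, Real.rpow_natCast]
  have e5 : q^(6-5*d) = q^(6:ℕ) / q^(5*d) := by
    rw [← Real.rpow_natCast q 6, ← Real.rpow_sub hq0]
    norm_num
  have hq5d : (0:ℝ) < q^(5*d) := Real.rpow_pos_of_pos hq0 _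
  have p1 : (3*q+1) ≤ 4*q := by linarith
  have p2 : q^5+1 ≤ 2*q^5 := by
    have : (1:ℝ) ≤ q^5 := one_le_pow₀ hq
    linarith
  have e34 : (512:ℝ)^d ≤ 512^2 := by rw [← e4]; exact e3
  calc (3*q+1) * (q^5+1) * (512/q^5)^d
      = ((3*q+1) * (q^5+1)) * ((512:ℝ)^d / q^(5*d)) := by rw [e1, e2]
    _ ≤ ((4*q) * (2*q^5)) * ((512^2:ℝ) / q^(5*d)) := by
        apply mul_le_mul
        · apply mul_le_mul p1 p2 (by positivity) (by positivity)
        · gcongr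
        · positivity
        · positivity
    _ = (8*512^2) * (q^(6:ℕ) / q^(5*d)) := by ring
    _ = (8*512^2) * q^(6-5*d) := by rw [← e5]

lemma tsum_ind (n : ℕ) : ∑' i : ℕ, (if i ≤ n then (1:ℝ≥0∞) else 0) = (n+1 : ℕ) := by
  rw [tsum_eq_sum (s := Finset.range (n+1)) (by intro i hi; simp at hi ⊢; omega)]
  rw [Finset.sum_congr rfl (fun i hi => if_pos (by simp at hi; omega))]
  simp

lemma diam_cb (x : Fin 2 → ℝ) {r : ℝ} (h : 0 ≤ r) :
    EMetric.diam (Metric.closedBall x r) ≤ ENNReal.ofReal (2*r) := by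
  rw [← Metric.emetric_closedBall h]
  calc EMetric.diam (EMetric.closedBall x (ENNReal.ofReal r)) ≤ 2 * ENNReal.ofReal r :=
        EMetric.diam_closedBall
    _ = ENNReal.ofReal (2*r) := by
        rw [ENNReal.ofReal_mul (by norm_num : (0:ℝ) ≤ 2)]
        norm_num

/-- box piece of the exceptional set -/
def piece (m₁ m₂ : ℤ) : Set (Fin 2 → ℝ) :=
  {ξ | ξ ∈ Wset ∧ ξ 0 ∈ Set.Icc (m₁:ℝ) (m₁+1) ∧ ξ 1 ∈ Set.Icc (m₂:ℝ) (m₂+1)}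

lemma W_subset_union : Wset ⊆ ⋃ m : ℤ × ℤ, piece m.1 m.2 := by
  intro ξ hξ
  refine Set.mem_iUnion.2 ⟨(⌊ξ 0⌋, ⌊ξ 1⌋), hξ, ⟨Int.floor_le _, ?_⟩, ⟨Int.floor_le _, ?_⟩⟩
  · exact (Int.lt_floor_add_one _).le
  · exact (Int.lt_floor_add_one _).le

noncomputable def rho (q : ℕ) : ℝ := 256/(q:ℝ)^5

noncomputable def ctr (m₁ m₂ : ℤ) (q rI i : ℕ) : Fin 2 → ℝ :=
  ![(((q:ℤ)*(m₁-1)+(rI:ℤ) : ℤ):ℝ)/(q:ℝ), (m₂:ℝ) + (i:ℝ) * rho q]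

noncomputable def cov (m₁ m₂ : ℤ) (K : ℕ) (x : ℕ×ℕ×ℕ) : Set (Fin 2 → ℝ) :=
  if x.2.1 ≤ 3*(x.1+K) ∧ x.2.2 ≤ (x.1+K)^5
  then Metric.closedBall (ctr m₁ m₂ (x.1+K) x.2.1 x.2.2) (rho (x.1+K)) else ∅

lemma piece_subset_cover (m₁ m₂ : ℤ) (K : ℕ) (hK : 4 ≤ K) :
    piece m₁ m₂ ⊆ ⋃ x : ℕ×ℕ×ℕ, cov m₁ m₂ K x := by
  rintro ξ ⟨hW, hx0, hx1⟩
  obtain ⟨q, hqK, hq1, p, hp⟩ := hW K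
  have hq4 : 4 ≤ q := le_trans hK hqK
  have hq4R : (4:ℝ) ≤ (q:ℝ) := by exact_mod_cast hq4
  have hq0 : (0:ℝ) < q := by linarith
  have hρpos : 0 < rho q := by unfold rho; positivity
  have hρle : rho q ≤ 1 := by
    unfold rho
    rw [div_le_one (by positivity)]
    have h45 : (4:ℝ)^5 ≤ (q:ℝ)^5 := pow_le_pow_left₀ (by norm_num) hq4R 5
    norm_num at h45
    linarith
  set P : ℤ := -p with hP
  have hdist0 : |ξ 0 - (P:ℝ)/q| ≤ rho q := by
    have hqne : (q:ℝ) ≠ 0 := ne_of_gt hq0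
    have heq : ξ 0 - (P:ℝ)/q = ((q:ℝ)*ξ 0 + p)/q := by
      rw [hP]
      push_cast
      field_simp
      ring
    have hmul : rho q * q = 256/(q:ℝ)^4 := by
      unfold rho
      field_simp
    rw [heq, abs_div, abs_of_pos hq0, div_le_iff₀ hq0, hmul]
    exact hp
  obtain ⟨hb0, hb0'⟩ := hx0
  obtain ⟨hb1, hb1'⟩ := hx1
  have habs := abs_le.1 hdist0
  have hPl : (m₁:ℝ) - 1 ≤ (P:ℝ)/q := by linarith
  have hPu : (P:ℝ)/q ≤ (m₁:ℝ) + 2 := by linarith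
  have hPil : (q:ℤ)*(m₁-1) ≤ P := by
    have := (le_div_iff₀ hq0).1 hPl
    have h2 : ((q:ℤ)*(m₁-1) : ℤ) ≤ (P:ℝ) := by push_cast; nlinarith
    exact_mod_cast h2
  have hPiu : P ≤ (q:ℤ)*(m₁+2) := by
    have := (div_le_iff₀ hq0).1 hPu
    have h2 : (P:ℝ) ≤ ((q:ℤ)*(m₁+2) : ℤ) := by push_cast; nlinarith
    exact_mod_cast h2
  set rI : ℕ := (P - (q:ℤ)*(m₁-1)).toNat with hrIdef
  have hrI : (rI:ℤ) = P - (q:ℤ)*(m₁-1) := Int.toNat_of_nonneg (by linarith)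
  have hrIle : rI ≤ 3*q := by
    have h3 : (q:ℤ)*(m₁+2) - (q:ℤ)*(m₁-1) = 3*q := by ring
    have : (rI:ℤ) ≤ 3*(q:ℤ) := by linarith
    exact_mod_cast this
  set y : ℝ := ξ 1 - m₂ with hy
  have hy0 : 0 ≤ y := by rw [hy]; linarith
  have hy1 : y ≤ 1 := by rw [hy]; linarith
  set iF : ℤ := ⌊y / rho q⌋ with hiF
  have hiF0 : 0 ≤ iF := Int.floor_nonneg.2 (by positivity)
  set i : ℕ := iF.toNat with hidef
  have hi : (i:ℤ) = iF := Int.toNat_of_nonneg hiF0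
  have hiR : (i:ℝ) = (iF:ℝ) := by exact_mod_cast hi
  have hile : i ≤ q^5 := by
    have h1 : (iF:ℝ) ≤ y / rho q := Int.floor_le _
    have h2 : y / rho q ≤ 1 / rho q := by gcongr
    have h3 : 1 / rho q = (q:ℝ)^5/256 := by
      unfold rho
      rw [one_div_div]
    have h4 : (q:ℝ)^5/256 ≤ (q:ℝ)^5 := by
      have : (0:ℝ) ≤ (q:ℝ)^5 := by positivity
      linarith
    have h5 : (iF:ℝ) ≤ ((q^5 : ℕ):ℝ) := by push_cast; linarith
    have h6 : iF ≤ ((q^5:ℕ):ℤ) := by exact_mod_cast h5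
    omega
  have hdist1 : |ξ 1 - ((m₂:ℝ) + (i:ℝ) * rho q)| ≤ rho q := by
    have h1 : (iF:ℝ) * rho q ≤ y := by
      have := Int.floor_le (y / rho q)
      calc (iF:ℝ) * rho q ≤ (y / rho q) * rho q :=
            mul_le_mul_of_nonneg_right this hρpos.le
        _ = y := by field_simp
    have h2 : y < ((iF:ℝ) + 1) * rho q := by
      have := Int.lt_floor_add_one (y / rho q)
      calc y = (y / rho q) * rho q := by field_simp
        _ < ((iF:ℝ) + 1) * rho q := mul_lt_mul_of_pos_right this hρpos
    have hy' : ξ 1 = y + (m₂:ℝ) := by rw [hy]; ring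
    rw [← hiR] at h1 h2
    rw [abs_le]
    constructor
    · linarith
    · linarith
  refine Set.mem_iUnion.2 ⟨(q - K, rI, i), ?_⟩
  have hqK' : q - K + K = q := by omega
  have hcov : cov m₁ m₂ K (q - K, rI, i)
      = if rI ≤ 3*q ∧ i ≤ q^5
        then Metric.closedBall (ctr m₁ m₂ q rI i) (rho q) else ∅ := by
    unfold cov
    dsimp only
    rw [hqK']
  rw [hcov, if_pos ⟨hrIle, hile⟩, Metric.mem_closedBall]
  rw [dist_pi_le_iff hρpos.le]
  intro j
  fin_cases j
  · show dist (ξ 0) (ctr m₁ m₂ q rI i 0) ≤ rho q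
    have hc0 : ctr m₁ m₂ q rI i 0 = (((q:ℤ)*(m₁-1)+(rI:ℤ) : ℤ):ℝ)/(q:ℝ) := rfl
    have hPeq : ((q:ℤ)*(m₁-1)+(rI:ℤ) : ℤ) = P := by linarith
    rw [hc0, hPeq, Real.dist_eq]
    exact hdist0
  · show dist (ξ 1) (ctr m₁ m₂ q rI i 1) ≤ rho q
    have hc1 : ctr m₁ m₂ q rI i 1 = (m₂:ℝ) + (i:ℝ) * rho q := rfl
    rw [hc1, Real.dist_eq]
    exact hdist1

lemma cov_tsum_le (m₁ m₂ : ℤ) {d : ℝ} (hd1 : 7/5 < d) (hd2 : d ≤ 2) (K : ℕ) (hK : 1 ≤ K) :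
    ∑' x : ℕ×ℕ×ℕ, EMetric.diam (cov m₁ m₂ K x) ^ d
      ≤ ENNReal.ofReal ((8*512^2) * ∑' q' : ℕ, ((q'+K:ℕ):ℝ)^(6-5*d)) := by
  have hd0 : (0:ℝ) < d := by linarith
  have hsum : Summable (fun n : ℕ => (n:ℝ)^(6-5*d)) :=
    Real.summable_nat_rpow.mpr (by linarith)
  have hsumK : Summable (fun q' : ℕ => ((q'+K:ℕ):ℝ)^(6-5*d)) :=
    hsum.comp_injective (add_left_injective K)
  -- inner bound for each q'
  have inner : ∀ q' : ℕ, (∑' y : ℕ×ℕ, EMetric.diam (cov m₁ m₂ K (q', y.1, y.2)) ^ d)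
      ≤ ENNReal.ofReal ((8*512^2) * ((q'+K:ℕ):ℝ)^(6-5*d)) := by
    intro q'
    set q : ℕ := q' + K with hqdef
    have hq1 : 1 ≤ q := by omega
    have hq1R : (1:ℝ) ≤ (q:ℝ) := by exact_mod_cast hq1
    have hq0 : (0:ℝ) < (q:ℝ) := by linarith
    have hbase : (0:ℝ) < 512/(q:ℝ)^5 := by positivity
    set D : ℝ≥0∞ := ENNReal.ofReal ((512/(q:ℝ)^5)^d) with hD
    have hterm : ∀ y : ℕ×ℕ, EMetric.diam (cov m₁ m₂ K (q', y.1, y.2)) ^ d ≤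
        (if y.1 ≤ 3*q then (1:ℝ≥0∞) else 0) * ((if y.2 ≤ q^5 then (1:ℝ≥0∞) else 0) * D) := by
      intro y
      unfold cov
      dsimp only
      by_cases h1 : y.1 ≤ 3*(q'+K)
      · by_cases h2 : y.2 ≤ (q'+K)^5
        · rw [if_pos ⟨h1, h2⟩, if_pos (show y.1 ≤ 3*q from h1),
            if_pos (show y.2 ≤ q^5 from h2), one_mul, one_mul]
          have hdiam : EMetric.diam
              (Metric.closedBall (ctr m₁ m₂ (q'+K) y.1 y.2) (rho (q'+K)))
              ≤ ENNReal.ofReal (512/(q:ℝ)^5) := by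
            have h0 : (0:ℝ) ≤ rho (q'+K) := by unfold rho; positivity
            refine le_trans (diam_cb _ h0) ?_
            apply ENNReal.ofReal_le_ofReal
            unfold rho
            rw [← hqdef]
            ring_nf
            exact le_rfl
          calc EMetric.diam (Metric.closedBall (ctr m₁ m₂ (q'+K) y.1 y.2) (rho (q'+K))) ^ d
              ≤ (ENNReal.ofReal (512/(q:ℝ)^5)) ^ d := ENNReal.rpow_le_rpow hdiam hd0.le
            _ = D := ENNReal.ofReal_rpow_of_pos hbase
        · rw [if_neg (by tauto), if_neg (show ¬ y.2 ≤ q^5 from h2)]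
          simp [EMetric.diam, ENNReal.zero_rpow_of_pos hd0]
      · rw [if_neg (by tauto), if_neg (show ¬ y.1 ≤ 3*q from h1)]
        simp [EMetric.diam, ENNReal.zero_rpow_of_pos hd0]
    calc (∑' y : ℕ×ℕ, EMetric.diam (cov m₁ m₂ K (q', y.1, y.2)) ^ d)
        ≤ ∑' y : ℕ×ℕ, (if y.1 ≤ 3*q then (1:ℝ≥0∞) else 0)
            * ((if y.2 ≤ q^5 then (1:ℝ≥0∞) else 0) * D) := ENNReal.tsum_le_tsum hterm
      _ = (∑' a : ℕ, (if a ≤ 3*q then (1:ℝ≥0∞) else 0))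
            * ((∑' b : ℕ, (if b ≤ q^5 then (1:ℝ≥0∞) else 0)) * D) := by
          rw [ENNReal.tsum_prod']
          have e2 : ∀ a:ℕ, (∑' b:ℕ, (if (a, b).1 ≤ 3*q then (1:ℝ≥0∞) else 0)
              * ((if (a, b).2 ≤ q^5 then (1:ℝ≥0∞) else 0) * D))
              = (if a ≤ 3*q then (1:ℝ≥0∞) else 0)
              * ((∑' b : ℕ, (if b ≤ q^5 then (1:ℝ≥0∞) else 0)) * D) := by
            intro a
            show (∑' b:ℕ, (if a ≤ 3*q then (1:ℝ≥0∞) else 0)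
              * ((if b ≤ q^5 then (1:ℝ≥0∞) else 0) * D)) = _
            rw [ENNReal.tsum_mul_left, ENNReal.tsum_mul_right]
          rw [tsum_congr e2, ENNReal.tsum_mul_right]
      _ = ((3*q+1 : ℕ) : ℝ≥0∞) * (((q^5+1 : ℕ) : ℝ≥0∞) * D) := by
          rw [tsum_ind, tsum_ind]
      _ ≤ ENNReal.ofReal ((8*512^2) * ((q'+K:ℕ):ℝ)^(6-5*d)) := by
          rw [hD, ← ENNReal.ofReal_natCast (3*q+1), ← ENNReal.ofReal_natCast (q^5+1),
            ← ENNReal.ofReal_mul (by positivity), ← ENNReal.ofReal_mul (by positivity)]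
          apply ENNReal.ofReal_le_ofReal
          rw [← hqdef]
          exact le_trans (le_of_eq (by push_cast; ring)) (real_term_bound hd2 hq1R)
  calc ∑' x : ℕ×ℕ×ℕ, EMetric.diam (cov m₁ m₂ K x) ^ d
      = ∑' q' : ℕ, ∑' y : ℕ×ℕ, EMetric.diam (cov m₁ m₂ K (q', y.1, y.2)) ^ d := by
        rw [ENNReal.tsum_prod']
    _ ≤ ∑' q' : ℕ, ENNReal.ofReal ((8*512^2) * ((q'+K:ℕ):ℝ)^(6-5*d)) :=
        ENNReal.tsum_le_tsum inner
    _ = ENNReal.ofReal (∑' q' : ℕ, (8*512^2) * ((q'+K:ℕ):ℝ)^(6-5*d)) := by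
        rw [ENNReal.ofReal_tsum_of_nonneg]
        · intro n
          positivity
        · exact hsumK.mul_left _
    _ = ENNReal.ofReal ((8*512^2) * ∑' q' : ℕ, ((q'+K:ℕ):ℝ)^(6-5*d)) := by
        rw [tsum_mul_left]

lemma mu_piece_zero (m₁ m₂ : ℤ) {d : ℝ} (hd1 : 7/5 < d) (hd2 : d ≤ 2) :
    μH[d] (piece m₁ m₂) = 0 := by
  refine le_antisymm ?_ (zero_le)
  set r : ℕ → ℝ≥0∞ := fun K => ENNReal.ofReal (512/(K:ℝ)^5) with hr_def
  have hrr : Tendsto (fun K : ℕ => (512:ℝ)/(K:ℝ)^5) atTop (𝓝 0) := by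
    apply Tendsto.div_atTop tendsto_const_nhds
    exact (tendsto_pow_atTop (by norm_num : 5 ≠ 0)).comp tendsto_natCast_atTop_atTop
  have hr : Tendsto r atTop (𝓝 0) := by
    rw [hr_def]
    have := (ENNReal.continuous_ofReal.tendsto 0).comp hrr
    simpa [Function.comp_def] using this
  have ht : ∀ᶠ K : ℕ in atTop, ∀ x : ℕ×ℕ×ℕ, EMetric.diam (cov m₁ m₂ K x) ≤ r K := by
    filter_upwards [eventually_ge_atTop 1] with K hK x
    have hKR : (1:ℝ) ≤ (K:ℝ) := by exact_mod_cast hK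
    unfold cov
    split_ifs with h
    · have h0 : (0:ℝ) ≤ rho (x.1+K) := by unfold rho; positivity
      refine le_trans (diam_cb _ h0) ?_
      apply ENNReal.ofReal_le_ofReal
      unfold rho
      have hq : (K:ℝ) ≤ ((x.1+K:ℕ):ℝ) := by exact_mod_cast Nat.le_add_left K x.1
      have hK5 : (0:ℝ) < (K:ℝ)^5 := by positivity
      have h5 : (K:ℝ)^5 ≤ ((x.1+K:ℕ):ℝ)^5 := pow_le_pow_left₀ (by linarith) hq 5
      calc 2 * (256/((x.1+K:ℕ):ℝ)^5) = 512/((x.1+K:ℕ):ℝ)^5 := by ring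
        _ ≤ 512/(K:ℝ)^5 := by
            apply div_le_div_of_nonneg_left (by norm_num) hK5 h5
    · simp [EMetric.diam]
  have hst : ∀ᶠ K : ℕ in atTop, piece m₁ m₂ ⊆ ⋃ x : ℕ×ℕ×ℕ, cov m₁ m₂ K x := by
    filter_upwards [eventually_ge_atTop 4] with K hK
    exact piece_subset_cover m₁ m₂ K hK
  refine le_trans
    (MeasureTheory.Measure.hausdorffMeasure_le_liminf_tsum d (piece m₁ m₂) r hr (fun K x => cov m₁ m₂ K x) ht hst) ?_
  have hS : Tendsto
      (fun K : ℕ => ENNReal.ofReal ((8*512^2) * ∑' q' : ℕ, ((q'+K:ℕ):ℝ)^(6-5*d)))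
      atTop (𝓝 0) := by
    have h0 : Tendsto (fun K : ℕ => ∑' q' : ℕ, ((q'+K:ℕ):ℝ)^(6-5*d)) atTop (𝓝 0) :=
      tendsto_sum_nat_add (fun n : ℕ => (n:ℝ)^(6-5*d))
    have h1 := h0.const_mul (8*512^2 : ℝ)
    rw [mul_zero] at h1
    have := (ENNReal.continuous_ofReal.tendsto 0).comp h1
    simpa [Function.comp_def] using this
  calc liminf (fun K : ℕ => ∑' x : ℕ×ℕ×ℕ, EMetric.diam (cov m₁ m₂ K x) ^ d) atTop
      ≤ liminf (fun K : ℕ =>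
          ENNReal.ofReal ((8*512^2) * ∑' q' : ℕ, ((q'+K:ℕ):ℝ)^(6-5*d))) atTop := by
        have ev : ∀ᶠ K : ℕ in atTop,
            (∑' x : ℕ×ℕ×ℕ, EMetric.diam (cov m₁ m₂ K x) ^ d)
              ≤ ENNReal.ofReal ((8*512^2) * ∑' q' : ℕ, ((q'+K:ℕ):ℝ)^(6-5*d)) := by
          filter_upwards [eventually_ge_atTop 1] with K hK
          exact cov_tsum_le m₁ m₂ hd1 hd2 K hK
        exact liminf_le_liminf ev
    _ = 0 := hS.liminf_eq

open scoped NNReal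

lemma dimH_piece (m₁ m₂ : ℤ) : dimH (piece m₁ m₂) ≤ (7/5 : ℝ≥0∞) := by
  by_contra hcon
  push_neg at hcon
  have h2 : (7/5:ℝ≥0∞) < min (dimH (piece m₁ m₂)) (3/2:ℝ≥0∞) :=
    lt_min hcon (by
      rw [show (7/5:ℝ≥0∞) = ENNReal.ofReal (7/5) by
          rw [ENNReal.ofReal_div_of_pos] <;> norm_num,
        show (3/2:ℝ≥0∞) = ENNReal.ofReal (3/2) by
          rw [ENNReal.ofReal_div_of_pos] <;> norm_num]
      rw [ENNReal.ofReal_lt_ofReal_iff (by norm_num)]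
      norm_num)
  obtain ⟨D, hD1, hD2⟩ := ENNReal.lt_iff_exists_nnreal_btwn.1 h2
  have hd1 : (7/5:ℝ) < (D:ℝ) := by
    rw [show (7/5:ℝ≥0∞) = ENNReal.ofReal (7/5) by
        rw [ENNReal.ofReal_div_of_pos] <;> norm_num,
      ← ENNReal.ofReal_coe_nnreal] at hD1
    exact (ENNReal.ofReal_lt_ofReal_iff_of_nonneg (by norm_num)).1 hD1
  have hd2 : (D:ℝ) ≤ 2 := by
    have hlt : (D:ℝ≥0∞) < (3/2:ℝ≥0∞) := lt_of_lt_of_le hD2 (min_le_right _ _)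
    rw [show (3/2:ℝ≥0∞) = ENNReal.ofReal (3/2) by
        rw [ENNReal.ofReal_div_of_pos] <;> norm_num,
      ← ENNReal.ofReal_coe_nnreal] at hlt
    have := (ENNReal.ofReal_lt_ofReal_iff (by norm_num)).1 hlt
    linarith
  have hzero : μH[(D:ℝ)] (piece m₁ m₂) = 0 := mu_piece_zero m₁ m₂ hd1 hd2
  have hdim : dimH (piece m₁ m₂) ≤ D :=
    dimH_le_of_hausdorffMeasure_ne_top (by rw [hzero]; exact ENNReal.zero_ne_top)
  have hlt2 : (D:ℝ≥0∞) < dimH (piece m₁ m₂) := lt_of_lt_of_le hD2 (min_le_left _ _)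
  exact absurd hlt2 (not_lt.2 hdim)



/-- `dim_H(Θ²) ≤ 7/5`. -/
theorem dimH_Theta_two_upper : dimH (Theta 2) ≤ (7 / 5 : ℝ≥0∞) := by
  have h1 : Theta 2 ⊆ ⋃ m : ℤ×ℤ, piece m.1 m.2 :=
    subset_trans theta_subset_W W_subset_union
  refine le_trans (dimH_mono h1) ?_
  rw [dimH_iUnion]
  exact iSup_le fun m => dimH_piece m.1 m.2

end BestApprox
end
end

section
/- Let n ≥ 3 be an integer, let ξ₃,…,ξₙ ∈ ℝ satisfy ω(ξ₃,…,ξₙ) = n − 2, and let ε > 0. Then there exists Q₀ = Q₀(ε) such that for every Q ≥ Q₀ there exist n − 1 linearly independent integer vectors u₁,…,u_{n−1} ∈ ℤ^{n−1} with max_{1≤i≤n−1} ‖û_i‖ ≤ Q and |u_i·(ξ₃,…,ξₙ,1)| ≤ Q^{−(n−2)+ε} for all 1 ≤ i ≤ n − 1. -/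
open Filter Set Topology
open scoped ENNReal

noncomputable section

namespace BestApprox

section Aux

lemma realVec_eq_zero_iff {k : ℕ} {q : Fin k → ℤ} : realVec q = 0 ↔ q = 0 := by
  constructor
  · intro h; funext i
    have := congrFun h i
    simpa [realVec] using this
  · rintro rfl; funext i; simp [realVec]

lemma realVec_cons {k : ℕ} (a : ℤ) (q : Fin k → ℤ) :
    realVec (Fin.cons a q) = Fin.cons (a : ℝ) (realVec q) := by
  funext i
  refine Fin.cases ?_ ?_ i <;> simp [realVec]

lemma realVec_single_zero {k : ℕ} :
    realVec (Pi.single (0 : Fin (k+1)) (1:ℤ)) = Pi.single (0 : Fin (k+1)) (1:ℝ) := by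
  funext i
  by_cases h : i = 0 <;> simp [realVec, Pi.single_apply, h]

lemma realVec_mulVec {k : ℕ} (M : Matrix (Fin k) (Fin k) ℤ) (q : Fin k → ℤ) :
    realVec (M.mulVec q) = (M.map (Int.cast : ℤ → ℝ)).mulVec (realVec q) := by
  funext i
  simp [realVec, Matrix.mulVec, dotProduct, Matrix.map_apply]

lemma realVec_smul {k : ℕ} (g : ℤ) (q : Fin k → ℤ) :
    realVec (g • q) = (g : ℝ) • realVec q := by
  funext i; simp [realVec]

lemma mulVec_norm_le {k : ℕ} (A : Matrix (Fin k) (Fin k) ℝ) (x : Fin k → ℝ) :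
    ‖A.mulVec x‖ ≤ (∑ i, ∑ j, |A i j|) * ‖x‖ := by
  have hnn : (0:ℝ) ≤ (∑ i, ∑ j, |A i j|) * ‖x‖ := by positivity
  rw [pi_norm_le_iff_of_nonneg hnn]
  intro i
  have h1 : ‖A.mulVec x i‖ ≤ ∑ j, |A i j| * ‖x‖ := by
    rw [Real.norm_eq_abs]
    calc |∑ j, A i j * x j| ≤ ∑ j, |A i j * x j| := Finset.abs_sum_le_sum_abs _ _
    _ ≤ ∑ j, |A i j| * ‖x‖ := by
        refine Finset.sum_le_sum fun j _ => ?_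
        rw [abs_mul]
        exact mul_le_mul_of_nonneg_left (by simpa using norm_le_pi_norm x j) (abs_nonneg _)
  refine h1.trans ?_
  rw [← Finset.sum_mul]
  refine mul_le_mul_of_nonneg_right ?_ (norm_nonneg _)
  exact Finset.single_le_sum (f := fun i => ∑ j, |A i j|) (fun i _ => by positivity) (Finset.mem_univ i)

lemma finite_ball_int {k : ℕ} (R : ℝ) :
    {z : Fin k → ℤ | ∀ i, |(z i : ℝ)| ≤ R}.Finite := by
  have : {z : Fin k → ℤ | ∀ i, |(z i : ℝ)| ≤ R} ⊆
      Set.univ.pi (fun _ : Fin k => {t : ℤ | |(t:ℝ)| ≤ R}) := by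
    intro z hz i _; exact hz i
  refine Set.Finite.subset (Set.Finite.pi fun i => ?_) this
  have : {t : ℤ | |(t:ℝ)| ≤ R} ⊆ Set.Icc (-(⌈R⌉)) ⌈R⌉ := by
    intro t ht
    simp only [Set.mem_Icc]
    have h1 : (|t| : ℝ) ≤ R := by
      simpa [Int.cast_abs] using (ht : |(t:ℝ)| ≤ R)
    have h2 : (|t| : ℤ) ≤ ⌈R⌉ := by
      exact_mod_cast h1.trans (Int.le_ceil R)
    rcases abs_cases t with ⟨h3, _⟩ | ⟨h3, _⟩ <;> omega
  exact Set.Finite.subset (Set.finite_Icc _ _) this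

lemma mulVec_injective {k : ℕ} (T : Matrix (Fin k) (Fin k) ℝ) (hdet : T.det ≠ 0) :
    Function.Injective T.mulVec := by
  intro x y hxy
  have h1 := congrArg (T⁻¹.mulVec) hxy
  rwa [Matrix.mulVec_mulVec, Matrix.mulVec_mulVec,
    Matrix.nonsing_inv_mul T (isUnit_iff_ne_zero.mpr hdet), Matrix.one_mulVec,
    Matrix.one_mulVec] at h1

lemma norm_mulVec_pos {k : ℕ} (T : Matrix (Fin k) (Fin k) ℝ) (hdet : T.det ≠ 0)
    {z : Fin k → ℤ} (hz : z ≠ 0) : 0 < ‖T.mulVec (realVec z)‖ := by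
  rw [norm_pos_iff]
  intro h0
  have h1 : T.mulVec (realVec z) = T.mulVec 0 := by simpa [Matrix.mulVec_zero] using h0
  have : realVec z = 0 := mulVec_injective T hdet h1
  exact hz (realVec_eq_zero_iff.mp this)

lemma exists_min_lattice {k : ℕ} (T : Matrix (Fin (k+1)) (Fin (k+1)) ℝ) (hdet : T.det ≠ 0) :
    ∃ z : Fin (k+1) → ℤ, z ≠ 0 ∧
      ∀ z' : Fin (k+1) → ℤ, z' ≠ 0 → ‖T.mulVec (realVec z)‖ ≤ ‖T.mulVec (realVec z')‖ := by
  classical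
  set f : (Fin (k+1) → ℤ) → ℝ := fun z => ‖T.mulVec (realVec z)‖ with hf
  have hz₀ : (Pi.single (0 : Fin (k+1)) (1:ℤ)) ≠ (0 : Fin (k+1) → ℤ) := by
    intro h
    have := congrFun h 0
    simp at this
  set R := f (Pi.single (0 : Fin (k+1)) (1:ℤ)) with hR
  set C := (∑ i, ∑ j, |T⁻¹ i j|) with hC
  have hbound : ∀ z : Fin (k+1) → ℤ, ∀ i, |(z i : ℝ)| ≤ C * f z := by
    intro z i
    have h1 : realVec z = T⁻¹.mulVec (T.mulVec (realVec z)) := by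
      rw [Matrix.mulVec_mulVec, Matrix.nonsing_inv_mul T (isUnit_iff_ne_zero.mpr hdet),
        Matrix.one_mulVec]
    have h2 : ‖realVec z‖ ≤ C * f z := by
      rw [h1]; exact mulVec_norm_le _ _
    exact le_trans (by simpa [realVec] using norm_le_pi_norm (realVec z) i) h2
  have hSfin : {z : Fin (k+1) → ℤ | z ≠ 0 ∧ f z ≤ R}.Finite := by
    refine Set.Finite.subset (finite_ball_int (C * R)) ?_
    intro z ⟨_, hzR⟩ i
    refine (hbound z i).trans ?_
    have hC0 : 0 ≤ C := by positivity
    exact mul_le_mul_of_nonneg_left hzR hC0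
  have hSne : {z : Fin (k+1) → ℤ | z ≠ 0 ∧ f z ≤ R}.Nonempty :=
    ⟨Pi.single 0 1, hz₀, le_refl _⟩
  obtain ⟨z, ⟨hzne, hzR⟩, hzmin⟩ := Set.exists_min_image _ f hSfin hSne
  refine ⟨z, hzne, fun z' hz' => ?_⟩
  by_cases h : f z' ≤ R
  · exact hzmin z' ⟨hz', h⟩
  · exact le_trans hzR (le_of_not_ge h)

end Aux
section Unimodular
set_option maxHeartbeats 1000000

lemma mulVec_injective_int {k : ℕ} (M : Matrix (Fin k) (Fin k) ℤ) (h : IsUnit M.det) :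
    Function.Injective M.mulVec := by
  intro x y hxy
  have h1 := congrArg (M⁻¹.mulVec) hxy
  rwa [Matrix.mulVec_mulVec, Matrix.mulVec_mulVec, Matrix.nonsing_inv_mul M h,
    Matrix.one_mulVec, Matrix.one_mulVec] at h1

lemma exists_unimodular {k : ℕ} (z : Fin (k+1) → ℤ)
    (hz : (1:ℤ) ∈ Ideal.span (Set.range z)) :
    ∃ M : Matrix (Fin (k+1)) (Fin (k+1)) ℤ, IsUnit M.det ∧ ∀ i, M i 0 = z i := by
  classical
  obtain ⟨u, hu⟩ := (Submodule.mem_span_range_iff_exists_fun ℤ).mp hz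
  let W : ((Fin (k+1)) → ℤ) →ₗ[ℤ] ℤ :=
    { toFun := fun x => ∑ i, u i * x i
      map_add' := by intro x y; simp [mul_add, Finset.sum_add_distrib]
      map_smul' := by
        intro c x
        simp only [Pi.smul_apply, smul_eq_mul, RingHom.id_apply, Finset.mul_sum]
        exact Finset.sum_congr rfl fun i _ => by ring }
  have hWz : W z = 1 := by simpa [W, mul_comm] using hu
  set K := LinearMap.ker W with hK
  obtain ⟨d, b⟩ := Submodule.basisOfPid (Pi.basisFun ℤ (Fin (k+1))) K
  set B : Fin (d+1) → (Fin (k+1) → ℤ) := Fin.cons z (fun i => (b i : Fin (k+1) → ℤ)) with hB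
  have hWB : ∀ i : Fin d, W (b i : Fin (k+1) → ℤ) = 0 := fun i => (b i).2
  have hLI : LinearIndependent ℤ B := by
    rw [Fintype.linearIndependent_iff]
    intro g hg
    have hg0 : g 0 = 0 := by
      have h1 := congrArg W hg
      rw [map_sum, map_zero] at h1
      rw [Fin.sum_univ_succ] at h1
      simp only [map_smul, smul_eq_mul] at h1
      rw [hB] at h1
      simp only [Fin.cons_zero, Fin.cons_succ, hWz, hWB, mul_one, mul_zero,
        Finset.sum_const_zero, add_zero] at h1
      exact h1
    have hrest : ∑ i : Fin d, g i.succ • (b i : Fin (k+1) → ℤ) = 0 := by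
      rw [Fin.sum_univ_succ, hg0] at hg
      simpa [hB] using hg
    have hrestK : ∑ i : Fin d, g i.succ • b i = (0 : K) := by
      apply Submodule.injective_subtype K
      rw [map_sum, map_zero]
      simp only [map_smul]
      simpa using hrest
    have hgs : ∀ i : Fin d, g i.succ = 0 :=
      Fintype.linearIndependent_iff.mp b.linearIndependent _ hrestK
    intro i
    refine Fin.cases hg0 hgs i
  have hSpan : ⊤ ≤ Submodule.span ℤ (Set.range B) := by
    intro x _
    have hxk : x - W x • z ∈ K := by
      rw [hK, LinearMap.mem_ker, map_sub, map_smul, hWz, smul_eq_mul, mul_one, sub_self]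
    have hx1 : W x • z ∈ Submodule.span ℤ (Set.range B) := by
      refine Submodule.smul_mem _ _ (Submodule.subset_span ⟨0, ?_⟩)
      simp [hB]
    have hx2 : x - W x • z ∈ Submodule.span ℤ (Set.range B) := by
      set y : K := ⟨x - W x • z, hxk⟩ with hy
      have hyr : (y : Fin (k+1) → ℤ) = ∑ i, b.repr y i • (b i : Fin (k+1) → ℤ) := by
        conv_lhs => rw [← b.sum_repr y]
        push_cast
        rfl
      have : (y : Fin (k+1) → ℤ) ∈ Submodule.span ℤ (Set.range B) := by
        rw [hyr]
        refine Submodule.sum_mem _ fun i _ => Submodule.smul_mem _ _ ?_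
        exact Submodule.subset_span ⟨i.succ, by simp [hB]⟩
      simpa [hy] using this
    have := Submodule.add_mem _ hx1 hx2
    simpa using this
  set Bb : Module.Basis (Fin (d+1)) ℤ (Fin (k+1) → ℤ) := Module.Basis.mk hLI hSpan with hBb
  have hd : d + 1 = k + 1 := by
    have h1 : Module.finrank ℤ (Fin (k+1) → ℤ) = Fintype.card (Fin (d+1)) :=
      Module.finrank_eq_card_basis Bb
    have h2 : Module.finrank ℤ (Fin (k+1) → ℤ) = k + 1 := by
      simp [Module.finrank_pi]
    simp only [Fintype.card_fin] at h1
    omega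
  set Bb' : Module.Basis (Fin (k+1)) ℤ (Fin (k+1) → ℤ) := Bb.reindex (finCongr hd) with hBb'
  set M : Matrix (Fin (k+1)) (Fin (k+1)) ℤ := (Pi.basisFun ℤ (Fin (k+1))).toMatrix Bb' with hM
  have hMdet : IsUnit M.det := by
    have : Invertible M := (Pi.basisFun ℤ (Fin (k+1))).invertibleToMatrix Bb'
    exact Matrix.isUnit_det_of_invertible M
  refine ⟨M, hMdet, fun i => ?_⟩
  have h0 : Bb' 0 = z := by
    rw [hBb']
    rw [Module.Basis.coe_reindex]
    have : (finCongr hd).symm (0 : Fin (k+1)) = (0 : Fin (d+1)) := by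
      apply Fin.ext; simp
    rw [Function.comp_apply, this, hBb, Module.Basis.coe_mk, hB, Fin.cons_zero]
  rw [hM, Module.Basis.toMatrix_apply, h0]
  simp

end Unimodular
section ML

lemma exists_norm_coord {k : ℕ} (x : Fin (k+1) → ℝ) : ∃ j, |x j| = ‖x‖ := by
  obtain ⟨j, _, hj⟩ := Finset.exists_max_image Finset.univ (fun i => |x i|)
    ⟨0, Finset.mem_univ 0⟩
  refine ⟨j, le_antisymm (by simpa [Real.norm_eq_abs] using norm_le_pi_norm x j) ?_⟩
  rw [pi_norm_le_iff_of_nonneg (abs_nonneg _)]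
  intro i
  simpa [Real.norm_eq_abs] using hj i (Finset.mem_univ i)

lemma norm_comp_succAbove {k : ℕ} (w : Fin (k+1) → ℝ) (j : Fin (k+1)) (hw : w j = 0) :
    ‖w‖ = ‖w ∘ j.succAbove‖ := by
  apply le_antisymm
  · rw [pi_norm_le_iff_of_nonneg (norm_nonneg _)]
    intro i
    by_cases h : i = j
    · simp [h, hw]
    · obtain ⟨a, ha⟩ := Fin.exists_succAbove_eq (Ne.symm (Ne.symm h))
      rw [← ha]
      exact norm_le_pi_norm (w ∘ j.succAbove) a
  · rw [pi_norm_le_iff_of_nonneg (norm_nonneg _)]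
    intro a
    exact norm_le_pi_norm w (j.succAbove a)

lemma mulVec_apply {k : ℕ} (B : Matrix (Fin k) (Fin k) ℝ) (x : Fin k → ℝ) (a : Fin k) :
    B.mulVec x a = ∑ t, B a t * x t := by
  simp [Matrix.mulVec, dotProduct]

theorem ml : ∀ (k : ℕ) (T : Matrix (Fin k) (Fin k) ℝ), T.det ≠ 0 →
    ∃ c : Fin k → (Fin k → ℤ), LinearIndependent ℝ (fun i => realVec (c i)) ∧
      ∏ i, ‖T.mulVec (realVec (c i))‖ ≤ 2^(k*k) * |T.det| := by
  intro k
  induction k with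
  | zero =>
      intro T hdet
      refine ⟨fun _ => 0, linearIndependent_empty_type, ?_⟩
      simp [Matrix.det_fin_zero]
  | succ k IH =>
      intro T hdet
      classical
      obtain ⟨z₁, hz₁ne, hz₁min⟩ := exists_min_lattice T hdet
      set lam := ‖T.mulVec (realVec z₁)‖ with hlamdef
      have hlampos : 0 < lam := norm_mulVec_pos T hdet hz₁ne
      -- primitivity of z₁
      have hprim : (1:ℤ) ∈ Ideal.span (Set.range z₁) := by
        set I := Ideal.span (Set.range z₁) with hI
        set g := Submodule.IsPrincipal.generator I with hg
        have hIg : Ideal.span {g} = I := Ideal.span_singleton_generator I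
        have hdvd : ∀ i, g ∣ z₁ i := by
          intro i
          rw [← Ideal.mem_span_singleton, hIg]
          exact Ideal.subset_span ⟨i, rfl⟩
        have hgne : g ≠ 0 := by
          intro h0
          apply hz₁ne
          funext i
          have := hdvd i
          rw [h0] at this
          simpa using (zero_dvd_iff.mp this)
        set z' : Fin (k+1) → ℤ := fun i => z₁ i / g with hz'
        have hz'g : z₁ = g • z' := by
          funext i
          simp only [Pi.smul_apply, smul_eq_mul, hz']
          exact (Int.mul_ediv_cancel' (hdvd i)).symm
        have hz'ne : z' ≠ 0 := by
          intro h0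
          apply hz₁ne
          rw [hz'g, h0, smul_zero]
        have hfact : lam = |(g:ℝ)| * ‖T.mulVec (realVec z')‖ := by
          rw [hlamdef]
          conv_lhs => rw [hz'g]
          rw [realVec_smul, Matrix.mulVec_smul, norm_smul, Real.norm_eq_abs]
        have hz'pos : 0 < ‖T.mulVec (realVec z')‖ := norm_mulVec_pos T hdet hz'ne
        have hmin := hz₁min z' hz'ne
        have habs1 : |(g:ℝ)| ≤ 1 := by
          by_contra hgt
          push_neg at hgt
          nlinarith [hfact, hmin, hz'pos]
        have habsZ : |g| ≤ 1 := by
          have h7 : ((|g| : ℤ) : ℝ) ≤ 1 := by rw [Int.cast_abs]; exact habs1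
          exact_mod_cast h7
        have hunit : IsUnit g := by
          rw [Int.isUnit_iff]
          rcases abs_cases g with ⟨h1, _⟩ | ⟨h1, _⟩ <;> omega
        have : I = ⊤ := by rw [← hIg]; exact Ideal.span_singleton_eq_top.mpr hunit
        rw [hI] at this ⊢
        rw [this]
        exact Submodule.mem_top
      obtain ⟨M, hMunit, hMz⟩ := exists_unimodular z₁ hprim
      set Mℝ : Matrix (Fin (k+1)) (Fin (k+1)) ℝ := M.map (Int.cast : ℤ → ℝ) with hMℝ
      have hMℝdet : Mℝ.det = ((M.det : ℤ) : ℝ) := by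
        rw [hMℝ]
        have h7 := RingHom.map_det (Int.castRingHom ℝ) M
        rw [RingHom.mapMatrix_apply, Int.coe_castRingHom] at h7
        exact h7.symm
      have habsM : |Mℝ.det| = 1 := by
        rw [hMℝdet]
        rcases Int.isUnit_iff.mp hMunit with h | h <;> simp [h]
      have hMℝdetne : Mℝ.det ≠ 0 := by
        intro h0; rw [h0] at habsM; simp at habsM
      set U := T * Mℝ with hU
      have hUdetabs : |U.det| = |T.det| := by
        rw [hU, Matrix.det_mul, abs_mul, habsM, mul_one]
      have hUdetne : U.det ≠ 0 := by
        rw [hU, Matrix.det_mul]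
        exact mul_ne_zero hdet hMℝdetne
      have hUvec : ∀ q : Fin (k+1) → ℤ,
          U.mulVec (realVec q) = T.mulVec (realVec (M.mulVec q)) := by
        intro q
        rw [realVec_mulVec, ← hMℝ, hU, ← Matrix.mulVec_mulVec]
      have hMinj : ∀ q : Fin (k+1) → ℤ, q ≠ 0 → M.mulVec q ≠ 0 := by
        intro q hq h0
        apply hq
        apply mulVec_injective_int M hMunit
        rw [h0, Matrix.mulVec_zero]
      have hUmin : ∀ z : Fin (k+1) → ℤ, z ≠ 0 → lam ≤ ‖U.mulVec (realVec z)‖ := by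
        intro z hz
        rw [hUvec]
        exact hz₁min _ (hMinj z hz)
      set e0 : Fin (k+1) → ℤ := Pi.single 0 1 with he0
      have he0ne : e0 ≠ 0 := by
        intro h
        have := congrFun h 0
        simp [he0] at this
      set v := U.mulVec (realVec e0) with hv
      have hve : M.mulVec e0 = z₁ := by
        funext i
        rw [he0]
        simp [Matrix.mulVec_single, hMz i]
      have hvT : v = T.mulVec (realVec z₁) := by rw [hv, hUvec, hve]
      have hnormv : ‖v‖ = lam := by rw [hvT]
      have hvcol : ∀ a, v a = U a 0 := by
        intro a
        rw [hv, realVec_single_zero]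
        simp [Matrix.mulVec_single]
      obtain ⟨j, hj⟩ := exists_norm_coord v
      have hvj : |v j| = lam := by rw [hj, hnormv]
      have hvjne : v j ≠ 0 := by
        intro h0
        rw [h0] at hvj
        simp at hvj
        linarith
      -- shear matrix
      set γ : Fin (k+1) → ℝ := fun t => if t = 0 then 0 else -U j t / v j with hγ
      set F : Matrix (Fin (k+1)) (Fin (k+1)) ℝ :=
        Matrix.of (fun i t => (if i = 0 then (1:ℝ) else 0) * γ t) with hF
      set E : Matrix (Fin (k+1)) (Fin (k+1)) ℝ := 1 + F with hE
      have hdetE : E.det = 1 := by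
        have htri : E.BlockTriangular id := by
          intro i t hti
          have hne : i ≠ t := by
            intro h; rw [h] at hti; exact lt_irrefl _ hti
          have hi0 : i ≠ 0 := by
            intro h
            rw [h] at hti
            simpa [Fin.lt_def] using hti
          rw [hE]
          simp [Matrix.one_apply_ne hne, hF, if_neg hi0]
        rw [Matrix.det_of_upperTriangular htri]
        have : ∀ i, E i i = 1 := by
          intro i
          rw [hE]
          by_cases h : i = (0 : Fin (k+1))
          · simp [h, hF, Matrix.one_apply_eq, hγ]
          · simp [hF, Matrix.one_apply_eq, if_neg h]
        simp [this]
      set A := U * E with hA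
      have hdetAU : A.det = U.det := by rw [hA, Matrix.det_mul, hdetE, mul_one]
      have hUF : ∀ a t, (U * F) a t = U a 0 * γ t := by
        intro a t
        rw [Matrix.mul_apply]
        rw [Finset.sum_eq_single (0 : Fin (k+1))]
        · simp [hF]
        · intro i _ hine
          simp [hF, if_neg hine]
        · intro h
          exact absurd (Finset.mem_univ _) h
      have hAapp : ∀ a t, A a t = U a t + U a 0 * γ t := by
        intro a t
        rw [hA, hE, Matrix.mul_add, Matrix.mul_one, Matrix.add_apply, hUF]
      have hAj : ∀ b : Fin k, A j b.succ = 0 := by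
        intro b
        rw [hAapp j b.succ, ← hvcol j]
        have h7 : γ b.succ = -U j b.succ / v j := by
          rw [hγ]
          simp [Fin.succ_ne_zero b]
        rw [h7]
        field_simp
        ring
      have hAcol0 : ∀ a, A a 0 = v a := by
        intro a
        rw [hAapp a 0, ← hvcol a]
        have h7 : γ 0 = 0 := by rw [hγ]; simp
        rw [h7, mul_zero, add_zero]
      set T'' := A.submatrix j.succAbove Fin.succ with hT''
      have hdetA : A.det = (-1)^((j:ℕ)) * v j * T''.det := by
        rw [Matrix.det_succ_row A j]
        rw [Finset.sum_eq_single (0 : Fin (k+1))]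
        · rw [hAcol0]
          rw [Fin.succAbove_zero]
          norm_num
          exact Or.inl rfl
        · intro t _ htne
          obtain ⟨b, hb⟩ := Fin.eq_succ_of_ne_zero htne
          rw [hb, hAj]
          ring
        · intro h
          exact absurd (Finset.mem_univ _) h
      have habsA : |T.det| = lam * |T''.det| := by
        rw [← hUdetabs, ← hdetAU, hdetA]
        rw [abs_mul, abs_mul, abs_pow, abs_neg, abs_one, one_pow, one_mul, hvj]
      have hdet''ne : T''.det ≠ 0 := by
        intro h0
        apply hUdetne
        rw [← hdetAU, hdetA, h0, mul_zero]
      obtain ⟨q, hqLI, hqprod⟩ := IH T'' hdet''ne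
      set r : Fin k → ℝ := fun i => ‖T''.mulVec (realVec (q i))‖ with hr
      have hrnn : ∀ i, 0 ≤ r i := fun i => norm_nonneg _
      set w : Fin k → (Fin (k+1) → ℝ) := fun i => Fin.cons 0 (realVec (q i)) with hw
      set s : Fin k → ℝ := fun i => ∑ t : Fin k, γ t.succ * (q i t : ℝ) with hs
      -- A *ᵥ w i coordinates
      have hAwj : ∀ i, (A.mulVec (w i)) j = 0 := by
        intro i
        rw [mulVec_apply, Fin.sum_univ_succ]
        simp [hw, hAj]
      have hAwsa : ∀ i a, (A.mulVec (w i)) (j.succAbove a) = (T''.mulVec (realVec (q i))) a := by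
        intro i a
        have h2 : T''.mulVec (realVec (q i)) a = ∑ b, A (j.succAbove a) b.succ * (q i b : ℝ) := by
          rw [mulVec_apply]
          refine Finset.sum_congr rfl fun b _ => ?_
          rw [hT'']
          simp [Matrix.submatrix_apply, realVec]
        rw [mulVec_apply, h2, Fin.sum_univ_succ]
        simp [hw, realVec]
      have hnormAw : ∀ i, ‖A.mulVec (w i)‖ = r i := by
        intro i
        rw [norm_comp_succAbove _ j (hAwj i), hr]
        congr 1
        funext a
        exact hAwsa i a
      have hAw : ∀ i, A.mulVec (w i) = U.mulVec (w i) + (s i) • v := by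
        intro i
        funext a
        rw [Pi.add_apply, Pi.smul_apply, smul_eq_mul, mulVec_apply, mulVec_apply]
        have h3 : ∀ t, A a t * w i t = U a t * w i t + U a 0 * (γ t * w i t) := by
          intro t; rw [hAapp]; ring
        rw [Finset.sum_congr rfl (fun t _ => h3 t), Finset.sum_add_distrib]
        congr 1
        rw [← Finset.mul_sum, hvcol a, mul_comm (s i)]
        congr 1
        rw [hs, Fin.sum_univ_succ]
        simp [hw, realVec]
      have hqne : ∀ i, q i ≠ 0 := by
        intro i h0
        refine hqLI.ne_zero i ?_
        have h1 : realVec (q i) = 0 := by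
          rw [h0]; funext t; simp [realVec]
        exact h1
      set tI : Fin k → ℤ := fun i => round (s i) with htI
      set cL : Fin k → (Fin (k+1) → ℤ) := fun i => Fin.cons (tI i) (q i) with hcL
      have hcLne : ∀ i, cL i ≠ 0 := by
        intro i h0
        apply hqne i
        funext b
        have := congrFun h0 b.succ
        simpa [hcL] using this
      set Y : Fin k → (Fin (k+1) → ℝ) := fun i => U.mulVec (realVec (cL i)) with hY
      have hUe0 : U.mulVec (Pi.single (0:Fin (k+1)) (1:ℝ)) = v := by
        rw [hv, realVec_single_zero]
      have hYdecomp : ∀ i, Y i = A.mulVec (w i) + ((tI i : ℝ) - s i) • v := by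
        intro i
        have h1 : realVec (cL i) = (Fin.cons (0:ℝ) (realVec (q i)) : Fin (k+1) → ℝ) +
            ((tI i : ℝ) • (Pi.single (0 : Fin (k+1)) (1:ℝ) : Fin (k+1) → ℝ)) := by
          funext t
          refine Fin.cases ?_ ?_ t
          · simp [hcL, realVec]
          · intro b
            simp [hcL, realVec, Pi.single_apply, Fin.succ_ne_zero b]
        simp only [hY]
        rw [h1, Matrix.mulVec_add, Matrix.mulVec_smul, hUe0, hAw i]
        simp only [hw]
        rw [sub_smul]
        abel
      have hYub : ∀ i, ‖Y i‖ ≤ r i + lam / 2 := by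
        intro i
        calc ‖Y i‖ ≤ ‖A.mulVec (w i)‖ + ‖((tI i : ℝ) - s i) • v‖ := by
              rw [hYdecomp i]; exact norm_add_le _ _
        _ ≤ r i + lam / 2 := by
            rw [hnormAw i, norm_smul, Real.norm_eq_abs, hnormv]
            have h4 : |(tI i : ℝ) - s i| ≤ 1/2 := by
              simp only [htI]
              rw [abs_sub_comm]
              exact abs_sub_round (s i)
            nlinarith [hlampos, abs_nonneg ((tI i : ℝ) - s i)]
      have hYlb : ∀ i, lam ≤ ‖Y i‖ := by
        intro i
        simp only [hY]
        exact hUmin (cL i) (hcLne i)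
      have hrlb : ∀ i, lam / 2 ≤ r i := by
        intro i
        have h5 := hYlb i
        have h6 := hYub i
        linarith
      have hY2r : ∀ i, ‖Y i‖ ≤ 2 * r i := by
        intro i
        have h5 := hYub i
        have h6 := hrlb i
        linarith
      -- final integer family
      set aF : Fin (k+1) → (Fin (k+1) → ℤ) := Fin.cons e0 cL with haF
      set cF : Fin (k+1) → (Fin (k+1) → ℤ) := fun i => M.mulVec (aF i) with hcF
      have haLI : LinearIndependent ℝ (fun i => realVec (aF i)) := by
        rw [Fintype.linearIndependent_iff]
        intro g hg
        have htail : ∀ b : Fin k, g b.succ = 0 := by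
          have hfun : ∑ i : Fin k, g i.succ • realVec (q i) = 0 := by
            funext b
            have hgb := congrFun hg b.succ
            rw [Finset.sum_apply] at hgb
            rw [Fin.sum_univ_succ] at hgb
            simp only [haF, Fin.cons_zero, Fin.cons_succ, Pi.smul_apply, smul_eq_mul] at hgb
            have he0b : realVec e0 b.succ = 0 := by
              rw [he0]
              simp [realVec, Pi.single_apply, Fin.succ_ne_zero b]
            rw [he0b, mul_zero, zero_add] at hgb
            rw [Finset.sum_apply]
            simp only [Pi.smul_apply, smul_eq_mul]
            have : ∀ i : Fin k, realVec (cL i) b.succ = realVec (q i) b := by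
              intro i
              simp [hcL, realVec]
            rw [Finset.sum_congr rfl fun i _ => by rw [this i]] at hgb
            simpa using hgb
          exact fun b => Fintype.linearIndependent_iff.mp hqLI _ hfun b
        have hzero : g 0 = 0 := by
          have hg0 := congrFun hg 0
          rw [Finset.sum_apply] at hg0
          rw [Fin.sum_univ_succ] at hg0
          simp only [haF, Fin.cons_zero, Fin.cons_succ, Pi.smul_apply, smul_eq_mul] at hg0
          have he00 : realVec e0 0 = 1 := by
            rw [he0]; simp [realVec]
          rw [he00, mul_one] at hg0
          have : ∀ i : Fin k, g i.succ * realVec (cL i) 0 = 0 := by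
            intro i
            rw [htail i, zero_mul]
          rw [Finset.sum_congr rfl fun i _ => this i] at hg0
          simpa using hg0
        intro i
        refine Fin.cases hzero htail i
      have hLIc : LinearIndependent ℝ (fun i => realVec (cF i)) := by
        have hker : LinearMap.ker (Matrix.mulVecLin Mℝ) = ⊥ :=
          LinearMap.ker_eq_bot.mpr (mulVec_injective Mℝ hMℝdetne)
        have hmap := haLI.map' (Matrix.mulVecLin Mℝ) hker
        have heq : (fun i => realVec (cF i)) =
            (⇑(Matrix.mulVecLin Mℝ) ∘ fun i => realVec (aF i)) := by
          funext i
          simp only [Function.comp_apply, Matrix.mulVecLin_apply, hcF]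
          rw [realVec_mulVec]
        rw [heq]
        exact hmap
      have hTc : ∀ i, T.mulVec (realVec (cF i)) = U.mulVec (realVec (aF i)) := by
        intro i
        simp only [hcF]
        exact (hUvec (aF i)).symm
      refine ⟨cF, hLIc, ?_⟩
      calc ∏ i, ‖T.mulVec (realVec (cF i))‖
          = ∏ i, ‖U.mulVec (realVec (aF i))‖ :=
            Finset.prod_congr rfl fun i _ => by rw [hTc i]
        _ = ‖U.mulVec (realVec (aF 0))‖ * ∏ i : Fin k, ‖U.mulVec (realVec (aF i.succ))‖ :=
            Fin.prod_univ_succ _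
        _ = lam * ∏ i : Fin k, ‖Y i‖ := by
            have hf0 : ‖U.mulVec (realVec (aF 0))‖ = lam := by
              have h9 : aF 0 = e0 := by simp [haF]
              rw [h9, ← hv]
              exact hnormv
            have hfs : ∀ i : Fin k, ‖U.mulVec (realVec (aF i.succ))‖ = ‖Y i‖ := by
              intro i
              have h9 : aF i.succ = cL i := by simp [haF]
              rw [h9]
              try simp only [hY]
            rw [hf0]
            exact congrArg _ (Finset.prod_congr rfl fun i _ => hfs i)
        _ ≤ lam * ∏ i : Fin k, (2 * r i) := by
            refine mul_le_mul_of_nonneg_left ?_ (le_of_lt hlampos)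
            exact Finset.prod_le_prod (fun i _ => norm_nonneg _) (fun i _ => hY2r i)
        _ = lam * (2^k * ∏ i, r i) := by
            rw [Finset.prod_mul_distrib, Finset.prod_const, Finset.card_univ, Fintype.card_fin]
        _ ≤ lam * (2^k * (2^(k*k) * |T''.det|)) := by
            refine mul_le_mul_of_nonneg_left ?_ (le_of_lt hlampos)
            exact mul_le_mul_of_nonneg_left hqprod (by positivity)
        _ = 2^(k + k*k) * (lam * |T''.det|) := by
            rw [pow_add]; ring
        _ = 2^(k + k*k) * |T.det| := by rw [← habsA]
        _ ≤ 2^((k+1)*(k+1)) * |T.det| := by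
            refine mul_le_mul_of_nonneg_right ?_ (abs_nonneg _)
            refine pow_le_pow_right₀ (by norm_num) ?_
            nlinarith

end ML
set_option maxHeartbeats 1000000

theorem main_aux (m : ℕ) (hm1 : 1 ≤ m) (ξ : Fin m → ℝ)
    (hω : oexp ξ = (((m : ℕ) : ℝ) : EReal)) (ε : ℝ) (hε : 0 < ε) :
    ∃ Q₀ : ℝ, ∀ Q : ℝ, Q₀ ≤ Q →
      ∃ u : Fin (m + 1) → Fin (m + 1) → ℤ,
        LinearIndependent ℝ (fun i => realVec (u i)) ∧
        ∀ i, ‖hat (u i)‖ ≤ Q ∧ linForm ξ (u i) ≤ Q ^ (-((m:ℕ):ℝ) + ε) := by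
  classical
  set mR : ℝ := ((m : ℕ) : ℝ) with hmRdef
  have hmR1 : (1:ℝ) ≤ mR := by rw [hmRdef]; exact_mod_cast hm1
  have hmRpos : (0:ℝ) < mR := lt_of_lt_of_le one_pos hmR1
  -- (∗): the ordinary exponent is exactly m, so forms are not too small
  have key : ∀ δ : ℝ, 0 < δ → ∃ Q₁ : ℝ, 1 ≤ Q₁ ∧ ∀ Q : ℝ, Q₁ ≤ Q →
      ∀ b : Fin (m+1) → ℤ, hat b ≠ 0 → ‖hat b‖ ≤ Q →
        Q ^ (-(mR + δ)) < linForm ξ b := by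
    intro δ hδ
    have hnotmem : ¬ ∃ C : ℝ, ∃ᶠ Q : ℝ in atTop, Q ^ (mR + δ) * minForm ξ Q ≤ C := by
      rintro ⟨C, hC⟩
      have hmem : (((mR + δ : ℝ)) : EReal) ∈ {t : EReal | ∃ t' : ℝ, t = (t' : EReal) ∧ 0 < t' ∧
          ∃ C : ℝ, ∃ᶠ Q : ℝ in atTop, Q ^ t' * minForm ξ Q ≤ C} :=
        ⟨mR + δ, rfl, by positivity, C, hC⟩
      have hle : (((mR + δ : ℝ)) : EReal) ≤ oexp ξ := le_sSup hmem
      rw [hω] at hle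
      have hcontra : mR + δ ≤ mR := by exact_mod_cast hle
      linarith
    rw [not_exists] at hnotmem
    have h1 := hnotmem 1
    rw [Filter.not_frequently] at h1
    have h2 : ∀ᶠ Q : ℝ in atTop, (1:ℝ) ≤ Q ∧ ¬ (Q ^ (mR + δ) * minForm ξ Q ≤ 1) :=
      (eventually_ge_atTop 1).and h1
    rw [Filter.eventually_atTop] at h2
    obtain ⟨Q₁, hQ₁⟩ := h2
    refine ⟨max Q₁ 1, le_max_right _ _, fun Q hQ b hb hbQ => ?_⟩
    have hQ1 : (1:ℝ) ≤ Q := le_trans (le_max_right _ _) hQ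
    obtain ⟨_, hQgt⟩ := hQ₁ Q (le_trans (le_max_left _ _) hQ)
    push_neg at hQgt
    have hminle : minForm ξ Q ≤ linForm ξ b := by
      apply csInf_le
      · refine ⟨0, fun rr hrr => ?_⟩
        obtain ⟨b', _, _, hr'⟩ := hrr
        rw [hr']
        exact abs_nonneg _
      · exact ⟨b, hb, hbQ, rfl⟩
    have hQpos : (0:ℝ) < Q := lt_of_lt_of_le one_pos hQ1
    have hpow : (0:ℝ) < Q ^ (mR + δ) := Real.rpow_pos_of_pos hQpos _
    have h3 : 1 < Q ^ (mR + δ) * linForm ξ b :=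
      lt_of_lt_of_le hQgt (mul_le_mul_of_nonneg_left hminle (le_of_lt hpow))
    rw [Real.rpow_neg (le_of_lt hQpos)]
    have h4 : 1 / (Q ^ (mR + δ)) < linForm ξ b := by
      rw [div_lt_iff₀ hpow]
      nlinarith [h3]
    rw [one_div] at h4
    exact h4
  -- parameters
  set ε' : ℝ := min ε 1 with hε'def
  have hε'pos : 0 < ε' := lt_min hε one_pos
  have hε'le1 : ε' ≤ 1 := min_le_right _ _
  have hε'leε : ε' ≤ ε := min_le_left _ _
  set δ : ℝ := ε' / (4 * mR * (mR + 1)) with hδdef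
  have hδpos : 0 < δ := by
    apply div_pos hε'pos
    nlinarith
  set γ' : ℝ := ε' / (8 * (mR + 1)) with hγ'def
  have hγ'pos : 0 < γ' := by
    apply div_pos hε'pos
    nlinarith
  have hA : mR * δ * (mR + 1) = ε' / 4 := by
    rw [hδdef]
    field_simp
  have hB : γ' * (mR + 1) = ε' / 8 := by
    rw [hγ'def]
    field_simp
  have hmδ : mR * δ ≤ 1/8 := by nlinarith
  have hγ'le : γ' ≤ 1/16 := by nlinarith
  have hδle : δ ≤ 1 := by nlinarith
  set D : ℝ := 1 + mR * δ with hDdef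
  have hD1 : (1:ℝ) ≤ D := by
    rw [hDdef]; nlinarith
  have hDpos : (0:ℝ) < D := lt_of_lt_of_le one_pos hD1
  set τ : ℝ := (1 - γ') / D with hτdef
  have hτpos : 0 < τ := by
    apply div_pos _ hDpos
    linarith
  have hτle1 : τ ≤ 1 := by
    rw [hτdef, div_le_one hDpos]
    linarith
  have hτhalf : 1/2 ≤ τ := by
    rw [hτdef, le_div_iff₀ hDpos]
    nlinarith
  have hτA : τ * D = 1 - γ' := by
    rw [hτdef]
    field_simp
  have hτB : τ * (mR * δ - mR) ≤ -mR + ε'/2 := by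
    rw [hτdef, div_mul_eq_mul_div, div_le_iff₀ hDpos, hDdef]
    nlinarith [mul_nonneg hγ'pos.le (mul_nonneg hmRpos.le hδpos.le),
      mul_nonneg hε'pos.le (mul_nonneg hmRpos.le hδpos.le),
      mul_nonneg (mul_nonneg hγ'pos.le hmRpos.le) hδpos.le]
  set Cm : ℝ := 2 ^ ((m+1)*(m+1)) with hCmdef
  have hCm1 : (1:ℝ) ≤ Cm := one_le_pow₀ (by norm_num)
  have hCmpos : (0:ℝ) < Cm := lt_of_lt_of_le one_pos hCm1
  obtain ⟨Q₁, hQ₁1, hQ₁⟩ := key δ hδpos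
  -- threshold
  refine ⟨max (max 2 (Q₁ * Q₁ + 1)) (max (Cm ^ (1/γ')) (Cm ^ (2/ε'))), fun Q hQ => ?_⟩
  have hQ2 : (2:ℝ) ≤ Q := le_trans (le_trans (le_max_left _ _) (le_max_left _ _)) hQ
  have hQ1le : (1:ℝ) ≤ Q := by linarith
  have hQpos : (0:ℝ) < Q := by linarith
  have hQsq : Q₁ * Q₁ + 1 ≤ Q := le_trans (le_trans (le_max_right _ _) (le_max_left _ _)) hQ
  have hQC1 : Cm ^ (1/γ') ≤ Q := le_trans (le_trans (le_max_left _ _) (le_max_right _ _)) hQ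
  have hQC2 : Cm ^ (2/ε') ≤ Q := le_trans (le_trans (le_max_right _ _) (le_max_right _ _)) hQ
  -- scale S
  set S : ℝ := Q ^ τ with hSdef
  have hSpos : (0:ℝ) < S := Real.rpow_pos_of_pos hQpos _
  have hS1 : (1:ℝ) ≤ S := by
    rw [hSdef]
    calc (1:ℝ) = Q ^ (0:ℝ) := (Real.rpow_zero Q).symm
    _ ≤ Q ^ τ := Real.rpow_le_rpow_of_exponent_le hQ1le hτpos.le
  have hSQhalf : Q ^ ((1:ℝ)/2) ≤ S := by
    rw [hSdef]
    exact Real.rpow_le_rpow_of_exponent_le hQ1le hτhalf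
  have hSQ₁ : Q₁ ≤ S := by
    have hq2 : Q₁ ^ (2:ℝ) = Q₁ * Q₁ := by
      rw [show (2:ℝ) = ((2:ℕ):ℝ) by norm_num, Real.rpow_natCast]
      ring
    have hc : Q₁ = (Q₁ * Q₁) ^ ((1:ℝ)/2) := by
      rw [← hq2, ← Real.rpow_mul (by linarith : (0:ℝ) ≤ Q₁)]
      norm_num
    calc Q₁ = (Q₁ * Q₁) ^ ((1:ℝ)/2) := hc
    _ ≤ Q ^ ((1:ℝ)/2) := Real.rpow_le_rpow (by nlinarith) (by linarith) (by norm_num)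
    _ ≤ S := hSQhalf
  have hCmγ : Cm ≤ Q ^ γ' := by
    calc Cm = (Cm ^ (1/γ')) ^ γ' := by
          rw [← Real.rpow_mul hCmpos.le, one_div_mul_cancel (ne_of_gt hγ'pos), Real.rpow_one]
    _ ≤ Q ^ γ' := Real.rpow_le_rpow (Real.rpow_nonneg hCmpos.le _) hQC1 hγ'pos.le
  have hCmε : Cm ≤ Q ^ (ε'/2) := by
    calc Cm = (Cm ^ (2/ε')) ^ (ε'/2) := by
          rw [← Real.rpow_mul hCmpos.le, show 2/ε' * (ε'/2) = 1 by field_simp, Real.rpow_one]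
    _ ≤ Q ^ (ε'/2) := Real.rpow_le_rpow (Real.rpow_nonneg hCmpos.le _) hQC2 (by positivity)
  -- the matrix
  set ρ : ℝ := S ^ (-mR) with hρdef
  have hρpos : (0:ℝ) < ρ := Real.rpow_pos_of_pos hSpos _
  set T : Matrix (Fin (m+1)) (Fin (m+1)) ℝ :=
    Matrix.of (fun a k2 => if a = Fin.last m then star ξ k2 / ρ else if k2 = a then 1/S else 0)
    with hT
  have htri : T.BlockTriangular ⇑OrderDual.toDual := by
    intro a k2 hak
    have hak' : a < k2 := hak
    have hne1 : a ≠ Fin.last m := by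
      intro h
      rw [h] at hak'
      exact absurd hak' (not_lt.mpr (Fin.le_last k2))
    have hne2 : k2 ≠ a := ne_of_gt hak'
    simp [hT, hne1, hne2]
  have hdetT : T.det = 1 := by
    rw [Matrix.det_of_lowerTriangular T htri, Fin.prod_univ_castSucc]
    have h1 : ∀ b : Fin m, T b.castSucc b.castSucc = 1/S := by
      intro b
      simp [hT, (Fin.castSucc_lt_last b).ne]
    have h2 : T (Fin.last m) (Fin.last m) = 1/ρ := by
      simp [hT, star, Fin.snoc_last]
    rw [Finset.prod_congr rfl fun b _ => h1 b, h2, Finset.prod_const, Finset.card_univ,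
      Fintype.card_fin]
    have h3 : ρ = (S ^ (m:ℕ))⁻¹ := by
      rw [hρdef, hmRdef, Real.rpow_neg hSpos.le, Real.rpow_natCast]
    rw [h3]
    have hSne : S ≠ 0 := ne_of_gt hSpos
    field_simp
    rw [← mul_pow, one_div, inv_mul_cancel₀ hSne, one_pow]
  have hdetTne : T.det ≠ 0 := by rw [hdetT]; exact one_ne_zero
  have hTlast : ∀ c : Fin (m+1) → ℤ, (T.mulVec (realVec c)) (Fin.last m) =
      (∑ k2, (c k2 : ℝ) * star ξ k2) / ρ := by
    intro c
    rw [mulVec_apply, Finset.sum_div]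
    refine Finset.sum_congr rfl fun k2 _ => ?_
    have hrow : T (Fin.last m) k2 = star ξ k2 / ρ := by simp [hT]
    rw [hrow]
    simp only [realVec]
    ring
  have hTcast : ∀ (c : Fin (m+1) → ℤ) (b : Fin m),
      (T.mulVec (realVec c)) b.castSucc = (c b.castSucc : ℝ) / S := by
    intro c b
    rw [mulVec_apply, Finset.sum_eq_single b.castSucc]
    · have hrow : T b.castSucc b.castSucc = 1/S := by
        simp [hT, (Fin.castSucc_lt_last b).ne]
      rw [hrow]
      simp only [realVec]
      ring
    · intro k2 _ hk2
      have hrow : T b.castSucc k2 = 0 := by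
        simp [hT, (Fin.castSucc_lt_last b).ne, hk2]
      rw [hrow, zero_mul]
    · intro h
      exact absurd (Finset.mem_univ _) h
  obtain ⟨c, hcLI, hcprod⟩ := ml (m+1) T hdetTne
  rw [hdetT, abs_one, mul_one] at hcprod
  set N : Fin (m+1) → ℝ := fun i => ‖T.mulVec (realVec (c i))‖ with hNdef
  have hNnn : ∀ i, 0 ≤ N i := fun i => norm_nonneg _
  have hNlast : ∀ i, linForm ξ (c i) / ρ ≤ N i := by
    intro i
    have h5 : |T.mulVec (realVec (c i)) (Fin.last m)| ≤ N i := by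
      simpa [Real.norm_eq_abs] using norm_le_pi_norm (T.mulVec (realVec (c i))) (Fin.last m)
    rw [hTlast (c i), abs_div, abs_of_pos hρpos] at h5
    exact h5
  have hNcast : ∀ (i : Fin (m+1)) (b : Fin m), |(c i b.castSucc : ℝ)| / S ≤ N i := by
    intro i b
    have h5 : |T.mulVec (realVec (c i)) b.castSucc| ≤ N i := by
      simpa [Real.norm_eq_abs] using norm_le_pi_norm (T.mulVec (realVec (c i))) b.castSucc
    rw [hTcast (c i) b, abs_div, abs_of_pos hSpos] at h5
    exact h5
  have hcne : ∀ i, c i ≠ 0 := by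
    intro i h0
    refine hcLI.ne_zero i ?_
    rw [h0]
    funext t
    simp [realVec]
  -- lower bound
  set β : ℝ := S ^ (-δ) with hβdef
  have hβpos : 0 < β := Real.rpow_pos_of_pos hSpos _
  have hβle1 : β ≤ 1 := Real.rpow_le_one_of_one_le_of_nonpos hS1 (by linarith)
  have hρinv : 1/ρ = S ^ mR := by
    rw [hρdef, Real.rpow_neg hSpos.le, one_div, inv_inv]
  have hSmR1 : (1:ℝ) ≤ S ^ mR := by
    calc (1:ℝ) = S ^ (0:ℝ) := (Real.rpow_zero S).symm
    _ ≤ S ^ mR := Real.rpow_le_rpow_of_exponent_le hS1 (by linarith)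
  have hNβ : ∀ i, β ≤ N i := by
    intro i
    by_cases hhat : hat (c i) = 0
    · have hlast : c i (Fin.last m) ≠ 0 := by
        intro h0
        apply hcne i
        funext a
        refine Fin.lastCases ?_ ?_ a
        · exact h0
        · intro b
          exact congrFun hhat b
      have hlin : (1:ℝ) ≤ linForm ξ (c i) := by
        rw [linForm]
        have hsum : ∑ k2, ((c i k2 : ℝ)) * star ξ k2 = (c i (Fin.last m) : ℝ) := by
          rw [Fin.sum_univ_castSucc]
          have hz : ∀ b : Fin m, ((c i b.castSucc : ℝ)) * star ξ b.castSucc = 0 := by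
            intro b
            have hb0 := congrFun hhat b
            rw [hat] at hb0
            simp only [Pi.zero_apply] at hb0
            rw [hb0]
            simp
          rw [Finset.sum_congr rfl fun b _ => hz b]
          simp [star, Fin.snoc_last]
        rw [hsum]
        have hge : (1:ℤ) ≤ |c i (Fin.last m)| := Int.one_le_abs hlast
        calc (1:ℝ) ≤ ((|c i (Fin.last m)| : ℤ) : ℝ) := by exact_mod_cast hge
        _ = |((c i (Fin.last m) : ℤ) : ℝ)| := by rw [Int.cast_abs]
      calc β ≤ 1 := hβle1
      _ ≤ S ^ mR := hSmR1
      _ = 1/ρ := hρinv.symm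
      _ ≤ linForm ξ (c i) / ρ := by gcongr
      _ ≤ N i := hNlast i
    · by_cases hbig : ‖hat (c i)‖ ≤ S
      · have hkey := hQ₁ S hSQ₁ (c i) hhat hbig
        have h7 : S ^ (-(mR + δ)) / ρ = β := by
          rw [hρdef, hβdef, ← Real.rpow_sub hSpos]
          congr 1
          ring
        calc β = S ^ (-(mR + δ)) / ρ := h7.symm
        _ ≤ linForm ξ (c i) / ρ := by gcongr
        _ ≤ N i := hNlast i
      · push_neg at hbig
        have hex : ∃ b : Fin m, S < ‖hat (c i) b‖ := by
          by_contra hcon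
          push_neg at hcon
          exact absurd ((pi_norm_le_iff_of_nonneg (by linarith)).mpr hcon) (not_le.mpr hbig)
        obtain ⟨b, hb⟩ := hex
        have hb' : S < |((c i b.castSucc : ℤ) : ℝ)| := by
          rw [hat, Int.norm_eq_abs] at hb
          exact hb
        calc β ≤ 1 := hβle1
        _ ≤ |((c i b.castSucc : ℤ) : ℝ)| / S := by
            rw [le_div_iff₀ hSpos]
            linarith
        _ ≤ N i := hNcast i b
  -- upper bound on each N i
  have hNub : ∀ i, N i ≤ Cm * S ^ (mR * δ) := by
    intro i
    have hsplit : N i * ∏ j ∈ Finset.univ.erase i, N j = ∏ j, N j :=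
      Finset.mul_prod_erase Finset.univ N (Finset.mem_univ i)
    have hcard : (Finset.univ.erase i).card = m := by
      rw [Finset.card_erase_of_mem (Finset.mem_univ i), Finset.card_univ, Fintype.card_fin]
      omega
    have herase : β ^ m ≤ ∏ j ∈ Finset.univ.erase i, N j := by
      calc β ^ m = ∏ _j ∈ Finset.univ.erase i, β := by rw [Finset.prod_const, hcard]
      _ ≤ ∏ j ∈ Finset.univ.erase i, N j :=
          Finset.prod_le_prod (fun _ _ => hβpos.le) (fun j _ => hNβ j)
    have hβm : (0:ℝ) < β ^ m := pow_pos hβpos m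
    have h8 : N i * β ^ m ≤ Cm := by
      calc N i * β ^ m ≤ N i * ∏ j ∈ Finset.univ.erase i, N j :=
            mul_le_mul_of_nonneg_left herase (hNnn i)
      _ = ∏ j, N j := hsplit
      _ ≤ Cm := hcprod
    have h9 : N i ≤ Cm / β ^ m := by
      rw [le_div_iff₀ hβm]
      exact h8
    have h10 : β ^ m = S ^ (-(mR * δ)) := by
      rw [hβdef, ← Real.rpow_natCast (S ^ (-δ)) m, ← Real.rpow_mul hSpos.le, hmRdef]
      congr 1
      ring
    rw [h10] at h9
    rwa [Real.rpow_neg hSpos.le, div_inv_eq_mul] at h9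
  -- final bounds
  have hSmain : Cm * (S * S ^ (mR * δ)) ≤ Q := by
    have h11 : S * S ^ (mR * δ) = Q ^ (τ * (1 + mR * δ)) := by
      rw [Real.rpow_mul hQpos.le, ← hSdef, Real.rpow_add hSpos, Real.rpow_one]
    rw [h11, ← hDdef, hτA]
    calc Cm * Q ^ (1 - γ') ≤ Q ^ γ' * Q ^ (1 - γ') :=
          mul_le_mul_of_nonneg_right hCmγ (Real.rpow_nonneg hQpos.le _)
    _ = Q := by
        rw [← Real.rpow_add hQpos]
        norm_num
  have hlinmain : Cm * (ρ * S ^ (mR * δ)) ≤ Q ^ (-mR + ε) := by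
    have h12 : ρ * S ^ (mR * δ) = Q ^ (τ * (mR * δ - mR)) := by
      rw [Real.rpow_mul hQpos.le, ← hSdef, hρdef, ← Real.rpow_add hSpos]
      congr 1
      ring
    rw [h12]
    have h13 : Cm * Q ^ (τ * (mR * δ - mR)) ≤ Q ^ (ε'/2) * Q ^ (-mR + ε'/2) :=
      mul_le_mul hCmε (Real.rpow_le_rpow_of_exponent_le hQ1le hτB)
        (Real.rpow_nonneg hQpos.le _) (Real.rpow_nonneg hQpos.le _)
    refine le_trans h13 ?_
    rw [← Real.rpow_add hQpos]
    apply Real.rpow_le_rpow_of_exponent_le hQ1le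
    linarith
  refine ⟨c, hcLI, ?_⟩
  intro i
  constructor
  · rw [pi_norm_le_iff_of_nonneg hQpos.le]
    intro b
    have hhatb : hat (c i) b = c i b.castSucc := rfl
    rw [hhatb, Int.norm_eq_abs]
    have h14 := hNcast i b
    rw [div_le_iff₀ hSpos] at h14
    have h16 := mul_le_mul_of_nonneg_right (hNub i) hSpos.le
    have h17 : Cm * S ^ (mR * δ) * S = Cm * (S * S ^ (mR * δ)) := by ring
    rw [h17] at h16
    exact le_trans h14 (le_trans h16 hSmain)
  · have h15 := hNlast i
    rw [div_le_iff₀ hρpos] at h15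
    have h16 := mul_le_mul_of_nonneg_right (hNub i) hρpos.le
    have h17 : Cm * S ^ (mR * δ) * ρ = Cm * (ρ * S ^ (mR * δ)) := by ring
    rw [h17] at h16
    exact le_trans h15 (le_trans h16 hlinmain)

theorem exists_independent_approx (n : ℕ) (hn : 3 ≤ n) (ξ : Fin (n - 2) → ℝ)
    (hω : oexp ξ = (((n - 2 : ℕ) : ℝ) : EReal)) (ε : ℝ) (hε : 0 < ε) :
    ∃ Q₀ : ℝ, ∀ Q : ℝ, Q₀ ≤ Q →
      ∃ u : Fin (n - 1) → Fin (n - 2 + 1) → ℤ,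
        LinearIndependent ℝ (fun i => realVec (u i)) ∧
        ∀ i, ‖hat (u i)‖ ≤ Q ∧ linForm ξ (u i) ≤ Q ^ (-((n : ℝ) - 2) + ε) := by
  have hm1 : 1 ≤ n - 2 := by omega
  obtain ⟨Q₀, hQ₀⟩ := main_aux (n - 2) hm1 ξ hω ε hε
  refine ⟨Q₀, fun Q hQ => ?_⟩
  obtain ⟨u, hLI, hu⟩ := hQ₀ Q hQ
  have hm1' : n - 1 = (n - 2) + 1 := by omega
  refine ⟨fun i => u (finCongr hm1' i), hLI.comp (finCongr hm1') (Equiv.injective _), ?_⟩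
  intro i
  refine ⟨(hu _).1, ?_⟩
  have h2 := (hu (finCongr hm1' i)).2
  have hexp : -(((n - 2 : ℕ) : ℝ)) + ε = -((n:ℝ) - 2) + ε := by
    have h2n : (2:ℕ) ≤ n := by omega
    rw [Nat.cast_sub h2n]
    norm_num
  rwa [hexp] at h2
end BestApprox
end
end
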